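/- arXiv:math/0605026 — 6 statements merged into one kernel-verified Lean document; each statement's English description precedes it below -/
import Mathlib

section
/- Let α_1,…,α_k ∈ D \ {0}, let s be a nonnegative integer and s_1,…,s_k positive integers, and set n = s + s_1 + ⋯ + s_k. Let 0 < c < 2^{−2n} and define h(z) = (−1)^n c ∏_{j=1}^k (1 + conj(α_j))^{2 s_j} / (1 − conj(α_j) z)^{s_j}. Then for every z on the unit circle ∂D with z ≠ 1 and z ≠ (1 + α_j)/(1 + conj(α_j)) for all j, the strict inequality |z^s ∏_{j=1}^k (z − α_j)^{s_j} + h(z) (z − 1)^{2s+1} ∏_{j=1}^k (z − (1 + α_j)/(1 + conj(α_j)))^{2 s_j}| < |z^s ∏_{j=1}^k (z − α_j)^{s_j}| holds. -/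
open Metric Complex

lemma aux_sq (z w : ℂ) (hzc : (starRingEnd ℂ) z * z = 1)
    (hw : (starRingEnd ℂ) w = -((starRingEnd ℂ) z * w)) :
    w ^ 2 = -(z * ((‖w‖ ^ 2 : ℝ) : ℂ)) := by
  have h1 : w * (starRingEnd ℂ) w = ((‖w‖ ^ 2 : ℝ) : ℂ) := by
    exact_mod_cast Complex.mul_conj' w
  rw [← h1]
  linear_combination z * w * hw - w ^ 2 * hzc

lemma aux_norm_lt (z : ℂ) (hz : ‖z‖ = 1) (hz1 : z ≠ 1) (t : ℝ)
    (ht0 : 0 < t) (ht1 : t < 1) : ‖1 + (t : ℂ) * (z - 1)‖ < 1 := by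
  have hns : Complex.normSq z = 1 := by
    rw [Complex.normSq_eq_norm_sq, hz]; norm_num
  have hz'' : z.re * z.re + z.im * z.im = 1 := by
    simpa [Complex.normSq_apply] using hns
  have hkey : Complex.normSq (1 + (t : ℂ) * (z - 1))
      = 1 - t * (1 - t) * Complex.normSq (z - 1) := by
    simp only [Complex.normSq_apply, Complex.add_re, Complex.add_im, Complex.mul_re,
      Complex.mul_im, Complex.sub_re, Complex.sub_im, Complex.one_re, Complex.one_im,
      Complex.ofReal_re, Complex.ofReal_im]
    nlinarith [hz'']
  have hpos : 0 < Complex.normSq (z - 1) := by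
    rw [Complex.normSq_pos]; exact sub_ne_zero.mpr hz1
  have h2 : Complex.normSq (1 + (t : ℂ) * (z - 1)) < 1 := by
    rw [hkey]
    nlinarith [mul_pos (mul_pos ht0 (by linarith : (0:ℝ) < 1 - t)) hpos]
  have h3 : ‖1 + (t : ℂ) * (z - 1)‖ ^ 2 < 1 := by
    rwa [Complex.sq_norm]
  nlinarith [norm_nonneg (1 + (t : ℂ) * (z - 1))]

lemma aux_fac (z α : ℂ) (m : ℕ) (hzc : (starRingEnd ℂ) z * z = 1)
    (ha : (1 : ℂ) + (starRingEnd ℂ) α ≠ 0)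
    (hden : (1 : ℂ) - (starRingEnd ℂ) α * z ≠ 0) (hzα : z - α ≠ 0) :
    (1 + (starRingEnd ℂ) α) ^ (2 * m) / (1 - (starRingEnd ℂ) α * z) ^ m *
        (z - (1 + α) / (1 + (starRingEnd ℂ) α)) ^ (2 * m)
      = (-1) ^ m *
          (((‖(1 + (starRingEnd ℂ) α) * z - (1 + α)‖ ^ 2 / ‖z - α‖ ^ 2 : ℝ)) : ℂ) ^ m *
          (z - α) ^ m := by
  set a := (starRingEnd ℂ) α with haa
  set w := (1 + a) * z - (1 + α) with hw
  have e1 : (1 + a) * (z - (1 + α) / (1 + a)) = w := by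
    field_simp
    rw [hw]
  have e2 : w ^ 2 = -(z * ((‖w‖ ^ 2 : ℝ) : ℂ)) := by
    apply aux_sq z w hzc
    simp only [hw, map_sub, map_add, map_mul, map_one, haa, Complex.conj_conj]
    linear_combination (1 + a) * hzc
  have e3 : (z - α) * (starRingEnd ℂ) (z - α) = ((‖z - α‖ ^ 2 : ℝ) : ℂ) := by
    exact_mod_cast Complex.mul_conj' (z - α)
  have e4 : 1 - a * z = z * (starRingEnd ℂ) (z - α) := by
    simp only [map_sub, haa]
    linear_combination -hzc
  have hna : ‖z - α‖ ^ 2 ≠ 0 := pow_ne_zero _ (norm_ne_zero_iff.mpr hzα)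
  have h5r : ‖w‖ ^ 2 / ‖z - α‖ ^ 2 * ‖z - α‖ ^ 2 = ‖w‖ ^ 2 := div_mul_cancel₀ _ hna
  have h5 : (((‖w‖ ^ 2 / ‖z - α‖ ^ 2 : ℝ)) : ℂ) * ((‖z - α‖ ^ 2 : ℝ) : ℂ)
      = ((‖w‖ ^ 2 : ℝ) : ℂ) := by
    rw [← Complex.ofReal_mul, h5r]
  have b1 : -(z * ((‖w‖ ^ 2 : ℝ) : ℂ))
      = (-1) * (((‖w‖ ^ 2 / ‖z - α‖ ^ 2 : ℝ)) : ℂ) * (z - α) * (1 - a * z) := by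
    rw [e4, ← h5, ← e3]; ring
  calc (1 + a) ^ (2 * m) / (1 - a * z) ^ m * (z - (1 + α) / (1 + a)) ^ (2 * m)
      = ((1 + a) * (z - (1 + α) / (1 + a))) ^ (2 * m) / (1 - a * z) ^ m := by
        rw [mul_pow]; ring
    _ = (w ^ 2) ^ m / (1 - a * z) ^ m := by rw [e1, ← pow_mul]
    _ = (-(z * ((‖w‖ ^ 2 : ℝ) : ℂ))) ^ m / (1 - a * z) ^ m := by rw [e2]
    _ = ((-1) * (((‖w‖ ^ 2 / ‖z - α‖ ^ 2 : ℝ)) : ℂ) * (z - α)) ^ m *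
          ((1 - a * z) ^ m / (1 - a * z) ^ m) := by
        rw [b1, mul_pow]; ring
    _ = ((-1) * (((‖w‖ ^ 2 / ‖z - α‖ ^ 2 : ℝ)) : ℂ) * (z - α)) ^ m := by
        rw [div_self (pow_ne_zero _ hden), mul_one]
    _ = (-1) ^ m * (((‖w‖ ^ 2 / ‖z - α‖ ^ 2 : ℝ)) : ℂ) ^ m * (z - α) ^ m := by
        rw [mul_pow, mul_pow]


/-- **Proposition (strict boundary inequality).** For `α j ∈ D \ {0}`, `s ≥ 0`,
`s j ≥ 1`, `n = s + ∑ s j`, `0 < c < 2^(-2n)` and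
`h(z) = (-1)^n c ∏ (1 + conj α j)^(2 s j) / (1 - conj α j · z)^(s j)`, the strict
inequality
`|z^s ∏ (z - α j)^(s j) + h(z) (z-1)^(2s+1) ∏ (z - (1+α j)/(1+conj α j))^(2 s j)|
  < |z^s ∏ (z - α j)^(s j)|`
holds for every `z` on the unit circle other than `1` and the points
`(1 + α j)/(1 + conj α j)`. -/
theorem strict_boundary_inequality
    (k : ℕ) (α : Fin k → ℂ) (hα : ∀ j, α j ∈ ball (0 : ℂ) 1 \ {0})
    (s : ℕ) (sj : Fin k → ℕ) (hsj : ∀ j, 0 < sj j)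
    (c : ℝ) (hc0 : 0 < c) (hc1 : c < ((2 : ℝ) ^ (2 * (s + ∑ j, sj j)))⁻¹)
    (z : ℂ) (hz : z ∈ sphere (0 : ℂ) 1) (hz1 : z ≠ 1)
    (hzτ : ∀ j, z ≠ (1 + α j) / (1 + (starRingEnd ℂ) (α j))) :
    ‖z ^ s * ∏ j, (z - α j) ^ sj j +
        ((-1) ^ (s + ∑ j, sj j) * (c : ℂ) *
            ∏ j, (1 + (starRingEnd ℂ) (α j)) ^ (2 * sj j) /
              (1 - (starRingEnd ℂ) (α j) * z) ^ sj j) *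
          ((z - 1) ^ (2 * s + 1) *
            ∏ j, (z - (1 + α j) / (1 + (starRingEnd ℂ) (α j))) ^ (2 * sj j))‖ <
      ‖z ^ s * ∏ j, (z - α j) ^ sj j‖ := by
  have hz' : ‖z‖ = 1 := by simpa using hz
  have hz0 : z ≠ 0 := by
    intro h; rw [h] at hz'; simp at hz'
  have hzc : (starRingEnd ℂ) z * z = 1 := by
    have h := Complex.mul_conj' z
    rw [hz'] at h
    rw [mul_comm]
    simpa using h
  have hαn : ∀ j, ‖α j‖ < 1 := by
    intro j
    have := (hα j).1
    simpa [Metric.mem_ball] using this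
  have ha1 : ∀ j, (1 : ℂ) + (starRingEnd ℂ) (α j) ≠ 0 := by
    intro j h
    have h2 : (starRingEnd ℂ) (α j) = -1 := by linear_combination h
    have h3 : ‖(starRingEnd ℂ) (α j)‖ = 1 := by rw [h2]; simp
    rw [RCLike.norm_conj] at h3
    exact absurd h3 (ne_of_lt (hαn j))
  have hzα : ∀ j, z - α j ≠ 0 := by
    intro j h
    have : z = α j := by linear_combination h
    rw [this] at hz'
    exact absurd hz' (ne_of_lt (hαn j))
  have hden : ∀ j, (1 : ℂ) - (starRingEnd ℂ) (α j) * z ≠ 0 := by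
    intro j h
    have h2 : (starRingEnd ℂ) (α j) * z = 1 := by linear_combination -h
    have h3 : ‖(starRingEnd ℂ) (α j) * z‖ = 1 := by rw [h2]; simp
    rw [norm_mul, RCLike.norm_conj, hz', mul_one] at h3
    exact absurd h3 (ne_of_lt (hαn j))
  have hwne : ∀ j, (1 + (starRingEnd ℂ) (α j)) * z - (1 + α j) ≠ 0 := by
    intro j h
    apply hzτ j
    rw [eq_div_iff (ha1 j)]
    linear_combination h
  -- real quantities
  set q : ℝ := ‖z - 1‖ ^ 2 with hqdef
  set r : Fin k → ℝ := fun j => ‖(1 + (starRingEnd ℂ) (α j)) * z - (1 + α j)‖ ^ 2 / ‖z - α j‖ ^ 2 with hrdef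
  set R : ℝ := q ^ s * ∏ j, r j ^ sj j with hRdef
  have hq0 : 0 < q := by
    rw [hqdef]
    exact pow_pos (norm_pos_iff.mpr (sub_ne_zero.mpr hz1)) 2
  have hr0 : ∀ j, 0 < r j := by
    intro j
    exact div_pos (pow_pos (norm_pos_iff.mpr (hwne j)) 2)
      (pow_pos (norm_pos_iff.mpr (hzα j)) 2)
  have hR0 : 0 < R := by
    rw [hRdef]
    exact mul_pos (pow_pos hq0 s) (Finset.prod_pos fun j _ => pow_pos (hr0 j) _)
  have hq4 : q ≤ 4 := by
    have h1 : ‖z - 1‖ ≤ 2 := by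
      have := norm_sub_le z 1
      simp only [norm_one, hz'] at this
      linarith
    rw [hqdef]
    nlinarith [norm_nonneg (z - 1)]
  have hr4 : ∀ j, r j ≤ 4 := by
    intro j
    have hid : (1 + (starRingEnd ℂ) (α j)) * z - (1 + α j)
        = (z - α j) - z * (starRingEnd ℂ) (z - α j) := by
      simp only [map_sub]
      linear_combination hzc
    have hwb : ‖(1 + (starRingEnd ℂ) (α j)) * z - (1 + α j)‖ ≤ 2 * ‖z - α j‖ := by
      rw [hid]
      refine le_trans (norm_sub_le _ _) ?_
      rw [norm_mul, hz', one_mul, RCLike.norm_conj]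
      linarith
    rw [hrdef]
    rw [div_le_iff₀ (pow_pos (norm_pos_iff.mpr (hzα j)) 2)]
    nlinarith [norm_nonneg ((1 + (starRingEnd ℂ) (α j)) * z - (1 + α j)), norm_nonneg (z - α j)]
  have hRb : R ≤ (2 : ℝ) ^ (2 * (s + ∑ j, sj j)) := by
    have h1 : R ≤ (4 : ℝ) ^ s * ∏ j, (4 : ℝ) ^ sj j := by
      rw [hRdef]
      apply mul_le_mul
      · exact pow_le_pow_left₀ hq0.le hq4 s
      · exact Finset.prod_le_prod (fun j _ => pow_nonneg (hr0 j).le _)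
          (fun j _ => pow_le_pow_left₀ (hr0 j).le (hr4 j) _)
      · exact Finset.prod_nonneg fun j _ => pow_nonneg (hr0 j).le _
      · positivity
    have h2 : (4 : ℝ) ^ s * ∏ j, (4 : ℝ) ^ sj j = 2 ^ (2 * (s + ∑ j, sj j)) := by
      rw [Finset.prod_pow_eq_pow_sum, ← pow_add,
        show (4 : ℝ) = 2 ^ 2 by norm_num, ← pow_mul, mul_add]
    linarith [h2 ▸ h1]
  have ht0 : 0 < c * R := mul_pos hc0 hR0
  have ht1 : c * R < 1 := by
    have hb : (0 : ℝ) < (2 : ℝ) ^ (2 * (s + ∑ j, sj j)) := by positivity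
    calc c * R ≤ c * (2 : ℝ) ^ (2 * (s + ∑ j, sj j)) :=
          mul_le_mul_of_nonneg_left hRb hc0.le
      _ < ((2 : ℝ) ^ (2 * (s + ∑ j, sj j)))⁻¹ * (2 : ℝ) ^ (2 * (s + ∑ j, sj j)) :=
          mul_lt_mul_of_pos_right hc1 hb
      _ = 1 := inv_mul_cancel₀ (ne_of_gt hb)
  -- complex identities
  have hsq1 : (z - 1) ^ 2 = -(z * ((q : ℝ) : ℂ)) := by
    rw [hqdef]
    apply aux_sq z _ hzc
    simp only [map_sub, map_one]
    linear_combination hzc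
  have hfac : ∀ j, (1 + (starRingEnd ℂ) (α j)) ^ (2 * sj j) /
        (1 - (starRingEnd ℂ) (α j) * z) ^ sj j *
        (z - (1 + α j) / (1 + (starRingEnd ℂ) (α j))) ^ (2 * sj j)
      = (-1) ^ sj j * ((r j : ℝ) : ℂ) ^ sj j * (z - α j) ^ sj j := by
    intro j
    rw [hrdef]
    exact aux_fac z (α j) (sj j) hzc (ha1 j) (hden j) (hzα j)
  have p1 : (∏ j, (1 + (starRingEnd ℂ) (α j)) ^ (2 * sj j) /
        (1 - (starRingEnd ℂ) (α j) * z) ^ sj j) *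
        (∏ j, (z - (1 + α j) / (1 + (starRingEnd ℂ) (α j))) ^ (2 * sj j))
      = (-1) ^ (∑ j, sj j) * (∏ j, ((r j : ℝ) : ℂ) ^ sj j) * (∏ j, (z - α j) ^ sj j) := by
    rw [← Finset.prod_mul_distrib]
    rw [Finset.prod_congr rfl fun j _ => hfac j]
    rw [Finset.prod_mul_distrib, Finset.prod_mul_distrib, Finset.prod_pow_eq_pow_sum]
  have p2 : (z - 1) ^ (2 * s + 1) = (-1) ^ s * z ^ s * ((q : ℝ) : ℂ) ^ s * (z - 1) := by
    rw [pow_succ, pow_mul, hsq1, neg_pow, mul_pow]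
    ring
  have hRC : ((R : ℝ) : ℂ) = ((q : ℝ) : ℂ) ^ s * ∏ j, ((r j : ℝ) : ℂ) ^ sj j := by
    rw [hRdef]
    push_cast
    ring
  have hsign : ((-1 : ℂ)) ^ (s + ∑ j, sj j) * (-1) ^ (∑ j, sj j) * (-1) ^ s = 1 := by
    rw [← pow_add, ← pow_add,
      show s + (∑ j, sj j) + (∑ j, sj j) + s = 2 * (s + ∑ j, sj j) by ring,
      pow_mul]
    norm_num
  have key_id : z ^ s * ∏ j, (z - α j) ^ sj j +
        ((-1) ^ (s + ∑ j, sj j) * (c : ℂ) *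
            ∏ j, (1 + (starRingEnd ℂ) (α j)) ^ (2 * sj j) /
              (1 - (starRingEnd ℂ) (α j) * z) ^ sj j) *
          ((z - 1) ^ (2 * s + 1) *
            ∏ j, (z - (1 + α j) / (1 + (starRingEnd ℂ) (α j))) ^ (2 * sj j))
      = (z ^ s * ∏ j, (z - α j) ^ sj j) * (1 + (c : ℂ) * (z - 1) * ((R : ℝ) : ℂ)) := by
    have hT : ((-1 : ℂ)) ^ (s + ∑ j, sj j) * (c : ℂ) *
          ((z - 1) ^ (2 * s + 1)) *
          ((∏ j, (1 + (starRingEnd ℂ) (α j)) ^ (2 * sj j) /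
              (1 - (starRingEnd ℂ) (α j) * z) ^ sj j) *
            (∏ j, (z - (1 + α j) / (1 + (starRingEnd ℂ) (α j))) ^ (2 * sj j)))
        = (z ^ s * ∏ j, (z - α j) ^ sj j) * ((c : ℂ) * (z - 1) * ((R : ℝ) : ℂ)) := by
      rw [p1, p2, hRC]
      linear_combination ((c : ℂ) * z ^ s * ((q : ℝ) : ℂ) ^ s * (z - 1) *
        (∏ j, ((r j : ℝ) : ℂ) ^ sj j) * (∏ j, (z - α j) ^ sj j)) * hsign
    calc z ^ s * ∏ j, (z - α j) ^ sj j +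
          ((-1) ^ (s + ∑ j, sj j) * (c : ℂ) *
              ∏ j, (1 + (starRingEnd ℂ) (α j)) ^ (2 * sj j) /
                (1 - (starRingEnd ℂ) (α j) * z) ^ sj j) *
            ((z - 1) ^ (2 * s + 1) *
              ∏ j, (z - (1 + α j) / (1 + (starRingEnd ℂ) (α j))) ^ (2 * sj j))
        = z ^ s * ∏ j, (z - α j) ^ sj j +
          ((-1 : ℂ)) ^ (s + ∑ j, sj j) * (c : ℂ) *
            ((z - 1) ^ (2 * s + 1)) *
            ((∏ j, (1 + (starRingEnd ℂ) (α j)) ^ (2 * sj j) /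
                (1 - (starRingEnd ℂ) (α j) * z) ^ sj j) *
              (∏ j, (z - (1 + α j) / (1 + (starRingEnd ℂ) (α j))) ^ (2 * sj j))) := by
          ring
      _ = z ^ s * ∏ j, (z - α j) ^ sj j +
            (z ^ s * ∏ j, (z - α j) ^ sj j) * ((c : ℂ) * (z - 1) * ((R : ℝ) : ℂ)) := by
          rw [hT]
      _ = (z ^ s * ∏ j, (z - α j) ^ sj j) * (1 + (c : ℂ) * (z - 1) * ((R : ℝ) : ℂ)) := by
          ring
  rw [key_id, norm_mul]
  have hPn : 0 < ‖z ^ s * ∏ j, (z - α j) ^ sj j‖ := by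
    rw [norm_pos_iff]
    exact mul_ne_zero (pow_ne_zero _ hz0)
      (Finset.prod_ne_zero_iff.mpr fun j _ => pow_ne_zero _ (hzα j))
  have hlt : ‖1 + (c : ℂ) * (z - 1) * ((R : ℝ) : ℂ)‖ < 1 := by
    have he : 1 + (c : ℂ) * (z - 1) * ((R : ℝ) : ℂ) = 1 + ((c * R : ℝ) : ℂ) * (z - 1) := by
      push_cast
      ring
    rw [he]
    exact aux_norm_lt z hz' hz1 _ ht0 ht1
  calc ‖z ^ s * ∏ j, (z - α j) ^ sj j‖ * ‖1 + (c : ℂ) * (z - 1) * ((R : ℝ) : ℂ)‖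
      < ‖z ^ s * ∏ j, (z - α j) ^ sj j‖ * 1 := mul_lt_mul_of_pos_left hlt hPn
    _ = ‖z ^ s * ∏ j, (z - α j) ^ sj j‖ := mul_one _
end

section
/- Let α_1,…,α_k ∈ D \ {0}, let s be a nonnegative integer and s_1,…,s_k positive integers, set n = s + s_1 + ⋯ + s_k, and let 0 < c < 2^{−2n}. For α ∈ D let γ_α(z) = (z − α)/(1 − conj(α) z) denote the Möbius automorphism of D. Then for every z on the unit circle ∂D, |z^s ∏_{j=1}^k γ_{α_j}(z)^{s_j} + (−1)^n c (z − 1)^{2s+1} ∏_{j=1}^k (γ_{α_j}(z) − 1)^{2 s_j}| ≤ |z^s ∏_{j=1}^k γ_{α_j}(z)^{s_j}| = 1. -/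
open Metric

set_option maxHeartbeats 1000000

lemma conj_mul_self_eq_one (w : ℂ) (hw : ‖w‖ = 1) : (starRingEnd ℂ) w * w = 1 := by
  rw [mul_comm, Complex.mul_conj, Complex.normSq_eq_norm_sq, hw]
  norm_num

lemma sq_sub_one_eq_neg (w : ℂ) (hw : ‖w‖ = 1) :
    (w - 1) ^ 2 = -((‖w - 1‖ ^ 2 : ℝ) : ℂ) * w := by
  have h1 : (starRingEnd ℂ) w * w = 1 := conj_mul_self_eq_one w hw
  have h2 : ((‖w - 1‖ ^ 2 : ℝ) : ℂ) = (w - 1) * ((starRingEnd ℂ) w - 1) := by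
    rw [show ((‖w - 1‖ ^ 2 : ℝ) : ℂ) = ((Complex.normSq (w - 1) : ℝ) : ℂ) by
      rw [Complex.normSq_eq_norm_sq],
      ← Complex.mul_conj, map_sub, map_one]
  rw [h2]
  linear_combination (w - 1) * h1

lemma mobius_norm (α z : ℂ) (hα : ‖α‖ < 1) (hz : ‖z‖ = 1) :
    ‖(z - α) / (1 - (starRingEnd ℂ) α * z)‖ = 1 := by
  have hne : z - α ≠ 0 := by
    intro h
    rw [sub_eq_zero] at h
    rw [h] at hz
    linarith
  have key : 1 - (starRingEnd ℂ) α * z = (starRingEnd ℂ) (z - α) * z := by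
    rw [map_sub, sub_mul, conj_mul_self_eq_one z hz]
  rw [norm_div, key, norm_mul, RCLike.norm_conj, hz, mul_one,
    div_self (norm_ne_zero_iff.mpr hne)]

lemma blaschke_aux (k : ℕ) (γ : Fin k → ℂ) (hγn : ∀ j, ‖γ j‖ = 1)
    (s : ℕ) (sj : Fin k → ℕ)
    (c : ℝ) (hc0 : 0 < c) (hc1 : c < ((2 : ℝ) ^ (2 * (s + ∑ j, sj j)))⁻¹)
    (z : ℂ) (hz1 : ‖z‖ = 1) :
    ‖z ^ s * ∏ j, γ j ^ sj j +
        (-1) ^ (s + ∑ j, sj j) * (c : ℂ) * (z - 1) ^ (2 * s + 1) *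
          ∏ j, (γ j - 1) ^ (2 * sj j)‖ ≤ 1 := by
  have hB : ‖z ^ s * ∏ j, γ j ^ sj j‖ = 1 := by
    rw [norm_mul, norm_pow, hz1, one_pow, norm_prod]
    simp [norm_pow, hγn]
  obtain ⟨T, hT⟩ : ∃ T : ℝ, T = (‖z - 1‖ ^ 2) ^ s * ∏ j, (‖γ j - 1‖ ^ 2) ^ sj j :=
    ⟨_, rfl⟩
  have hT0 : 0 ≤ T := by
    rw [hT]
    exact mul_nonneg (pow_nonneg (sq_nonneg _) s)
      (Finset.prod_nonneg fun j _ => pow_nonneg (sq_nonneg _) _)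
  have h0 : (z - 1) ^ 2 = -((‖z - 1‖ ^ 2 : ℝ) : ℂ) * z := sq_sub_one_eq_neg z hz1
  have hj : ∀ j, (γ j - 1) ^ 2 = -((‖γ j - 1‖ ^ 2 : ℝ) : ℂ) * γ j :=
    fun j => sq_sub_one_eq_neg (γ j) (hγn j)
  have hkey : (-1 : ℂ) ^ (s + ∑ j, sj j) * (c : ℂ) * (z - 1) ^ (2 * s + 1) *
      ∏ j, (γ j - 1) ^ (2 * sj j)
      = (c : ℂ) * ((T : ℝ) : ℂ) * (z - 1) * (z ^ s * ∏ j, γ j ^ sj j) := by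
    have e1 : (z - 1) ^ (2 * s + 1) = ((z - 1) ^ 2) ^ s * (z - 1) := by
      rw [pow_succ, pow_mul]
    have e3 : ∏ j, (γ j - 1) ^ (2 * sj j)
        = (-1 : ℂ) ^ (∑ j, sj j) * (∏ j, ((‖γ j - 1‖ ^ 2 : ℝ) : ℂ) ^ sj j) *
          ∏ j, γ j ^ sj j := by
      rw [← Finset.prod_pow_eq_pow_sum, ← Finset.prod_mul_distrib,
        ← Finset.prod_mul_distrib]
      apply Finset.prod_congr rfl
      intro j _
      rw [pow_mul, hj j, neg_mul, neg_pow, mul_pow]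
      exact (mul_assoc _ _ _).symm
    have hsign : (-1 : ℂ) ^ (s + ∑ j, sj j) * ((-1 : ℂ) ^ s * (-1 : ℂ) ^ (∑ j, sj j)) = 1 := by
      rw [← pow_add, ← pow_add]
      exact Even.neg_one_pow ⟨s + ∑ j, sj j, rfl⟩
    have hTc : ((T : ℝ) : ℂ)
        = ((‖z - 1‖ ^ 2 : ℝ) : ℂ) ^ s * ∏ j, ((‖γ j - 1‖ ^ 2 : ℝ) : ℂ) ^ sj j := by
      rw [hT, Complex.ofReal_mul, Complex.ofReal_pow, Complex.ofReal_prod]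
      simp [Complex.ofReal_pow]
    have e4 : (-((‖z - 1‖ ^ 2 : ℝ) : ℂ) * z) ^ s
        = (-1 : ℂ) ^ s * ((‖z - 1‖ ^ 2 : ℝ) : ℂ) ^ s * z ^ s := by
      rw [neg_mul, neg_pow, mul_pow]; ring
    rw [e1, e3, h0, hTc, e4]
    linear_combination ((c : ℂ) * (z - 1) * ((‖z - 1‖ ^ 2 : ℝ) : ℂ) ^ s * z ^ s *
      (∏ j, ((‖γ j - 1‖ ^ 2 : ℝ) : ℂ) ^ sj j) * (∏ j, γ j ^ sj j)) * hsign
  have hTle : T ≤ 2 ^ (2 * (s + ∑ j, sj j)) := by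
    rw [hT]
    have hz4 : ‖z - 1‖ ^ 2 ≤ 4 := by
      have h2 : ‖z - 1‖ ≤ 2 := by
        calc ‖z - 1‖ ≤ ‖z‖ + ‖(1 : ℂ)‖ := norm_sub_le _ _
        _ = 2 := by rw [hz1]; norm_num
      nlinarith [norm_nonneg (z - 1)]
    have hγ4 : ∀ j, ‖γ j - 1‖ ^ 2 ≤ 4 := by
      intro j
      have h2 : ‖γ j - 1‖ ≤ 2 := by
        calc ‖γ j - 1‖ ≤ ‖γ j‖ + ‖(1 : ℂ)‖ := norm_sub_le _ _
        _ = 2 := by rw [hγn j]; norm_num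
      nlinarith [norm_nonneg (γ j - 1)]
    calc (‖z - 1‖ ^ 2) ^ s * ∏ j, (‖γ j - 1‖ ^ 2) ^ sj j
        ≤ (4 : ℝ) ^ s * ∏ j, (4 : ℝ) ^ sj j := by
          apply mul_le_mul
          · exact pow_le_pow_left₀ (sq_nonneg _) hz4 s
          · apply Finset.prod_le_prod
            · intro j _; exact pow_nonneg (sq_nonneg _) _
            · intro j _; exact pow_le_pow_left₀ (sq_nonneg _) (hγ4 j) (sj j)
          · exact Finset.prod_nonneg fun j _ => pow_nonneg (sq_nonneg _) _
          · positivity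
      _ = 4 ^ (s + ∑ j, sj j) := by
          rw [Finset.prod_pow_eq_pow_sum, ← pow_add]
      _ = 2 ^ (2 * (s + ∑ j, sj j)) := by
          rw [pow_mul]; norm_num
  have h2n : (0 : ℝ) < 2 ^ (2 * (s + ∑ j, sj j)) := by positivity
  have ht1 : c * T ≤ 1 := by
    have h1 : c * T ≤ c * 2 ^ (2 * (s + ∑ j, sj j)) := by nlinarith
    have h2 : c * 2 ^ (2 * (s + ∑ j, sj j)) < 1 := by
      have h3 := mul_lt_mul_of_pos_right hc1 h2n
      rwa [inv_mul_cancel₀ (ne_of_gt h2n)] at h3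
    linarith
  have ht0 : 0 ≤ c * T := mul_nonneg hc0.le hT0
  rw [hkey]
  have hfact : z ^ s * ∏ j, γ j ^ sj j + (c : ℂ) * ((T : ℝ) : ℂ) * (z - 1) *
      (z ^ s * ∏ j, γ j ^ sj j)
      = (z ^ s * ∏ j, γ j ^ sj j) *
        (((1 - c * T : ℝ) : ℂ) + ((c * T : ℝ) : ℂ) * z) := by
    push_cast
    ring
  rw [hfact, norm_mul, hB, one_mul]
  calc ‖((1 - c * T : ℝ) : ℂ) + ((c * T : ℝ) : ℂ) * z‖
      ≤ ‖((1 - c * T : ℝ) : ℂ)‖ + ‖((c * T : ℝ) : ℂ) * z‖ := norm_add_le _ _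
    _ = |1 - c * T| + |c * T| * 1 := by
        rw [norm_mul, hz1, Complex.norm_real, Complex.norm_real,
          Real.norm_eq_abs, Real.norm_eq_abs]
    _ = (1 - c * T) + c * T := by
        rw [abs_of_nonneg (by linarith), abs_of_nonneg ht0]; ring
    _ = 1 := by ring

/-- **Inequality (7) in the paper.** For `α j ∈ D \ {0}`, `s ≥ 0`, `s j ≥ 1`,
`n = s + ∑ s j`, `0 < c < 2^(-2n)`, and the Möbius automorphisms
`γ_α(z) = (z - α)/(1 - conj α · z)`, for every `z` on the unit circle one has
`|z^s ∏ γ_{α j}(z)^(s j) + (-1)^n c (z-1)^(2s+1) ∏ (γ_{α j}(z) - 1)^(2 s j)|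
  ≤ |z^s ∏ γ_{α j}(z)^(s j)| = 1`. -/
theorem blaschke_boundary_inequality
    (k : ℕ) (α : Fin k → ℂ) (hα : ∀ j, α j ∈ ball (0 : ℂ) 1 \ {0})
    (s : ℕ) (sj : Fin k → ℕ) (hsj : ∀ j, 0 < sj j)
    (c : ℝ) (hc0 : 0 < c) (hc1 : c < ((2 : ℝ) ^ (2 * (s + ∑ j, sj j)))⁻¹)
    (z : ℂ) (hz : z ∈ sphere (0 : ℂ) 1) :
    ‖z ^ s * ∏ j, ((z - α j) / (1 - (starRingEnd ℂ) (α j) * z)) ^ sj j +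
        (-1) ^ (s + ∑ j, sj j) * (c : ℂ) * (z - 1) ^ (2 * s + 1) *
          ∏ j, ((z - α j) / (1 - (starRingEnd ℂ) (α j) * z) - 1) ^ (2 * sj j)‖ ≤
      ‖z ^ s * ∏ j, ((z - α j) / (1 - (starRingEnd ℂ) (α j) * z)) ^ sj j‖ ∧
    ‖z ^ s * ∏ j, ((z - α j) / (1 - (starRingEnd ℂ) (α j) * z)) ^ sj j‖ = 1 := by
  have hz1 : ‖z‖ = 1 := by simpa using hz
  have hγn : ∀ j, ‖(z - α j) / (1 - (starRingEnd ℂ) (α j) * z)‖ = 1 := by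
    intro j
    have hαj : ‖α j‖ < 1 := by
      have := (hα j).1
      simpa using this
    exact mobius_norm (α j) z hαj hz1
  have hB : ‖z ^ s * ∏ j, ((z - α j) / (1 - (starRingEnd ℂ) (α j) * z)) ^ sj j‖ = 1 := by
    rw [norm_mul, norm_pow, hz1, one_pow, norm_prod]
    simp only [norm_pow, hγn, one_pow, Finset.prod_const_one, one_mul]
  exact ⟨hB ▸ blaschke_aux k (fun j => (z - α j) / (1 - (starRingEnd ℂ) (α j) * z))
    hγn s sj c hc0 hc1 z hz1, hB⟩
end

section
/- If f is a holomorphic self-map of the open unit disc D (i.e., f : D → D holomorphic) satisfying f(z) = z + O(|z − 1|^4) as z → 1 within D, then f(z) = z for all z ∈ D. -/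
open Metric Complex

namespace BKAux

lemma norm_lt_of_normSq_lt {a b : ℂ} (h : normSq a < normSq b) : ‖a‖ < ‖b‖ := by
  rw [Complex.norm_def, Complex.norm_def]
  exact Real.sqrt_lt_sqrt (normSq_nonneg _) h

lemma normSq_eq_norm_sq (a : ℂ) : normSq a = ‖a‖ ^ 2 := by
  exact Complex.normSq_eq_norm_sq a

lemma re_cayley (w : ℂ) (hw : (1 : ℂ) - w ≠ 0) :
    ((1 + w) / (1 - w)).re = (1 - normSq w) / normSq (1 - w) := by
  have h2 : normSq (1 - w) ≠ 0 := (normSq_pos.2 hw).ne'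
  rw [Complex.div_re, ← add_div]
  congr 1
  simp [normSq_apply]
  ring

lemma norm_sub_lt_norm_add_conj {a b : ℂ} (ha : 0 < a.re) (hb : 0 < b.re) :
    ‖a - b‖ < ‖a + (starRingEnd ℂ) b‖ := by
  apply norm_lt_of_normSq_lt
  simp only [normSq_apply, sub_re, sub_im, add_re, add_im, conj_re, conj_im]
  nlinarith [mul_pos ha hb]

end BKAux

namespace BKAux

lemma growth {w : ℂ → ℂ} (hd : DifferentiableOn ℂ w (ball (0:ℂ) 1))
    (hp : ∀ z ∈ ball (0:ℂ) 1, 0 < (w z).re) :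
    ∀ z ∈ ball (0:ℂ) 1, ‖w 0‖ * (1 - ‖z‖) ≤ 2 * ‖w z‖ := by
  intro z hz
  have h0 : (0:ℂ) ∈ ball (0:ℂ) 1 := by simp
  have hbre : 0 < (w 0).re := hp 0 h0
  set b := w 0 with hb
  set g : ℂ → ℂ := fun ζ => (w ζ - b) / (w ζ + (starRingEnd ℂ) b) with hg
  have hden : ∀ ζ ∈ ball (0:ℂ) 1, w ζ + (starRingEnd ℂ) b ≠ 0 := by
    intro ζ hζ hc
    have h1 : 0 < (w ζ + (starRingEnd ℂ) b).re := by
      simp only [add_re, conj_re]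
      linarith [hp ζ hζ]
    rw [hc] at h1; simp at h1
  have hgd : DifferentiableOn ℂ g (ball (0:ℂ) 1) := by
    exact (hd.sub_const b).div (hd.add_const _) hden
  have hmaps : Set.MapsTo g (ball (0:ℂ) 1) (ball (0:ℂ) 1) := by
    intro ζ hζ
    rw [mem_ball_zero_iff, hg]
    simp only
    rw [norm_div]
    have hlt := norm_sub_lt_norm_add_conj (hp ζ hζ) hbre
    have hpos : 0 < ‖w ζ + (starRingEnd ℂ) b‖ := (norm_nonneg _).trans_lt hlt
    exact (div_lt_one hpos).2 hlt
  have hg0 : g 0 = 0 := by simp [hg, ← hb]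
  have hsch := Complex.norm_le_norm_of_mapsTo_ball hgd (hmaps.mono_right ball_subset_closedBall) hg0
      (R := 1) (z := z) (by rw [← mem_ball_zero_iff]; exact hz)
  have hdz := hden z hz
  have hposz : 0 < ‖w z + (starRingEnd ℂ) b‖ := norm_pos_iff.2 hdz
  rw [hg] at hsch
  simp only at hsch
  rw [norm_div, div_le_iff₀ hposz] at hsch
  have h1 : ‖b‖ - ‖w z‖ ≤ ‖w z - b‖ := by
    have := norm_sub_norm_le b (w z)
    rw [norm_sub_rev] at this; linarith
  have h2 : ‖w z + (starRingEnd ℂ) b‖ ≤ ‖w z‖ + ‖b‖ := by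
    calc ‖w z + (starRingEnd ℂ) b‖ ≤ ‖w z‖ + ‖(starRingEnd ℂ) b‖ := norm_add_le _ _
    _ = ‖w z‖ + ‖b‖ := by rw [RCLike.norm_conj]
  have hz1 : ‖z‖ < 1 := mem_ball_zero_iff.1 hz
  nlinarith [norm_nonneg (w z), norm_nonneg b, norm_nonneg z]

end BKAux

namespace BKAux

lemma normSq_lt_one {a : ℂ} (h : ‖a‖ < 1) : normSq a < 1 := by
  rw [normSq_eq_norm_sq]; nlinarith [norm_nonneg a]

lemma mobius_den_ne {z0 ζ : ℂ} (h0 : ‖z0‖ < 1) (hζ : ‖ζ‖ < 1) :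
    1 + (starRingEnd ℂ) z0 * ζ ≠ 0 := by
  intro hc
  have h1 : ‖(starRingEnd ℂ) z0 * ζ‖ < 1 := by
    rw [norm_mul, RCLike.norm_conj]
    nlinarith [norm_nonneg z0, norm_nonneg ζ]
  have h2 : (starRingEnd ℂ) z0 * ζ = -1 := by linear_combination hc
  rw [h2] at h1; simp at h1

lemma mobius_mapsTo {z0 ζ : ℂ} (h0 : ‖z0‖ < 1) (hζ : ‖ζ‖ < 1) :
    ‖ζ + z0‖ < ‖1 + (starRingEnd ℂ) z0 * ζ‖ := by
  apply norm_lt_of_normSq_lt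
  have h1 : normSq z0 < 1 := normSq_lt_one h0
  have h2 : normSq ζ < 1 := normSq_lt_one hζ
  simp only [normSq_apply, add_re, add_im, mul_re, mul_im, conj_re, conj_im, one_re, one_im] at *
  nlinarith [mul_pos (sub_pos.2 h1) (sub_pos.2 h2)]

end BKAux

namespace BKAux

lemma zeta_facts {z0 : ℂ} {x : ℝ} (h0 : ‖z0‖ < 1) (hx0 : 0 ≤ x) (hx1 : x < 1) :
    ‖((x : ℂ) - z0) / (1 - (starRingEnd ℂ) z0 * x)‖ < 1 ∧
    (1 - x) * (1 - normSq z0) / 8 ≤ 1 - ‖((x : ℂ) - z0) / (1 - (starRingEnd ℂ) z0 * x)‖ := by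
  have hxn : ‖(-(x:ℂ))‖ < 1 := by
    rw [norm_neg, Complex.norm_real]
    rwa [Real.norm_eq_abs, _root_.abs_of_nonneg hx0]
  have hkey := mobius_mapsTo h0 hxn
  have heq1 : (-(x:ℂ)) + z0 = -((x:ℂ) - z0) := by ring
  have heq2 : 1 + (starRingEnd ℂ) z0 * (-(x:ℂ)) = 1 - (starRingEnd ℂ) z0 * x := by ring
  rw [heq1, heq2, norm_neg] at hkey
  set A := ‖(x : ℂ) - z0‖ with hA
  set Bn := ‖(1 : ℂ) - (starRingEnd ℂ) z0 * x‖ with hBn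
  have hA0 : 0 ≤ A := norm_nonneg _
  have hBn0 : 0 < Bn := hA0.trans_lt hkey
  have hnsq0 : 0 ≤ normSq z0 := normSq_nonneg _
  have hnsq1 : normSq z0 < 1 := normSq_lt_one h0
  have hBA : Bn ^ 2 - A ^ 2 = (1 - x ^ 2) * (1 - normSq z0) := by
    rw [hA, hBn, ← normSq_eq_norm_sq, ← normSq_eq_norm_sq]
    simp only [normSq_apply, sub_re, sub_im, mul_re, mul_im, conj_re, conj_im, one_re, one_im,
      ofReal_re, ofReal_im]
    ring
  have hBn2 : Bn ≤ 2 := by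
    rw [hBn]
    calc ‖(1 : ℂ) - (starRingEnd ℂ) z0 * x‖ ≤ ‖(1:ℂ)‖ + ‖(starRingEnd ℂ) z0 * x‖ := norm_sub_le _ _
    _ ≤ 2 := by
        rw [norm_mul, RCLike.norm_conj, Complex.norm_real, Real.norm_eq_abs, _root_.abs_of_nonneg hx0]
        simp only [norm_one]
        nlinarith [norm_nonneg z0]
  have hAB4 : A + Bn ≤ 4 := by
    have : A ≤ Bn := hkey.le
    linarith
  have h6 : (1 - x ^ 2) * (1 - normSq z0) ≤ (Bn - A) * 4 := by
    have h5 : (Bn - A) * (Bn + A) = (1 - x ^ 2) * (1 - normSq z0) := by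
      linear_combination hBA
    nlinarith [sub_nonneg.2 hkey.le]
  have hquot : ‖((x : ℂ) - z0) / (1 - (starRingEnd ℂ) z0 * x)‖ = A / Bn := by
    rw [norm_div]
  constructor
  · rw [hquot]
    exact (div_lt_one hBn0).2 hkey
  · rw [hquot]
    rw [div_le_iff₀ (by norm_num : (0:ℝ) < 8)] at *
    have hAd : A / Bn ≤ 1 - (1 - x) * (1 - normSq z0) / 8 := by
      rw [div_le_iff₀ hBn0]
      nlinarith [mul_nonneg (mul_nonneg (sub_nonneg.2 hx1.le) (sub_nonneg.2 hnsq1.le))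
        (sub_nonneg.2 hBn2), mul_nonneg (mul_nonneg hx0 (sub_nonneg.2 hx1.le))
        (sub_nonneg.2 hnsq1.le)]
    linarith

end BKAux

namespace BKAux

lemma T_den_ne {z0 : ℂ} {x : ℝ} (h0 : ‖z0‖ < 1) (hx0 : 0 ≤ x) (hx1 : x < 1) :
    (1 : ℂ) - (starRingEnd ℂ) z0 * x ≠ 0 := by
  have hxn : ‖(-(x:ℂ))‖ < 1 := by
    rw [norm_neg, Complex.norm_real, Real.norm_eq_abs, _root_.abs_of_nonneg hx0]
    exact hx1
  have := mobius_den_ne h0 hxn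
  intro hc; apply this
  linear_combination hc

lemma T_zeta_eq {z0 : ℂ} {x : ℝ} (h0 : ‖z0‖ < 1) (hx0 : 0 ≤ x) (hx1 : x < 1) :
    (((x : ℂ) - z0) / (1 - (starRingEnd ℂ) z0 * x) + z0) /
      (1 + (starRingEnd ℂ) z0 * (((x : ℂ) - z0) / (1 - (starRingEnd ℂ) z0 * x))) = (x : ℂ) := by
  have hd := T_den_ne h0 hx0 hx1
  have hnsq1 : normSq z0 < 1 := normSq_lt_one h0
  have hn : (1 : ℂ) - (normSq z0 : ℂ) ≠ 0 := by
    intro hc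
    have : ((1 - normSq z0 : ℝ) : ℂ) = 0 := by push_cast; linear_combination hc
    rw [Complex.ofReal_eq_zero] at this
    linarith
  have hden2 : 1 + (starRingEnd ℂ) z0 * (((x : ℂ) - z0) / (1 - (starRingEnd ℂ) z0 * x))
      = (1 - (normSq z0 : ℂ)) / (1 - (starRingEnd ℂ) z0 * x) := by
    field_simp
    linear_combination -Complex.mul_conj z0
  rw [hden2]
  rw [div_eq_iff (div_ne_zero hn hd)]
  rw [← Complex.mul_conj, div_add' _ _ _ hd, mul_div_assoc', div_left_inj' hd]
  ring

end BKAux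


namespace BKAux

lemma le_add_all {a b : ℝ} (h : ∀ ε : ℝ, 0 < ε → a ≤ b + ε) : a ≤ b := by
  by_contra hc
  push_neg at hc
  have := h ((a - b) / 2) (by linarith)
  linarith

end BKAux


open Metric

set_option maxHeartbeats 2000000 in
/-- **Burns–Krantz theorem on the disc.** If `f` is a holomorphic self-map of the open
unit disc satisfying `f(z) = z + O(|z - 1|^4)` as `z → 1` within the disc,
then `f(z) = z` for all `z` in the disc. -/
theorem burns_krantz_disc
    (f : ℂ → ℂ)
    (hf : DifferentiableOn ℂ f (ball (0 : ℂ) 1))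
    (hmap : Set.MapsTo f (ball (0 : ℂ) 1) (ball (0 : ℂ) 1))
    (hO : ∃ C > (0 : ℝ), ∃ δ > (0 : ℝ), ∀ z ∈ ball (0 : ℂ) 1,
      ‖z - 1‖ < δ → ‖f z - z‖ ≤ C * ‖z - 1‖ ^ 4) :
    ∀ z ∈ ball (0 : ℂ) 1, f z = z := by
  obtain ⟨C, hC, δ, hδ, hOb⟩ := hO
  set v : ℂ → ℂ := fun z => (1 + f z) / (1 - f z) - (1 + z) / (1 - z) with hv
  have hz1 : ∀ z ∈ ball (0 : ℂ) 1, (1 : ℂ) - z ≠ 0 := by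
    intro z hz hc
    have hz' : z = 1 := by linear_combination -hc
    rw [mem_ball_zero_iff, hz'] at hz
    simp at hz
  have hf1 : ∀ z ∈ ball (0 : ℂ) 1, (1 : ℂ) - f z ≠ 0 := fun z hz => hz1 _ (hmap hz)
  have hvdiff : DifferentiableOn ℂ v (ball (0 : ℂ) 1) := by
    apply DifferentiableOn.sub
    · exact ((differentiableOn_const _).add hf).div ((differentiableOn_const _).sub hf) hf1
    · exact ((differentiableOn_const _).add differentiableOn_id).div
        ((differentiableOn_const _).sub differentiableOn_id) hz1
  have hident : ∀ z ∈ ball (0 : ℂ) 1, v z = 2 * (f z - z) / ((1 - f z) * (1 - z)) := by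
    intro z hz
    have h1 := hf1 z hz
    have h2 := hz1 z hz
    rw [hv]
    simp only
    field_simp
    ring
  have hu_re : ∀ z ∈ ball (0 : ℂ) 1, 0 ≤ ((1 + f z) / (1 - f z)).re := by
    intro z hz
    rw [BKAux.re_cayley _ (hf1 z hz)]
    apply div_nonneg _ (normSq_nonneg _)
    have := BKAux.normSq_lt_one (mem_ball_zero_iff.1 (hmap hz))
    linarith
  set δ' : ℝ := min δ (min 1 (1 / (2 * C))) with hδ'def
  have hδ'0 : 0 < δ' := lt_min hδ (lt_min one_pos (by positivity))
  have hδ'δ : δ' ≤ δ := min_le_left _ _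
  have hδ'1 : δ' ≤ 1 := le_trans (min_le_right _ _) (min_le_left _ _)
  have hδ'C : δ' ≤ 1 / (2 * C) := le_trans (min_le_right _ _) (min_le_right _ _)
  set C' : ℝ := 4 * C with hC'def
  have hC'0 : 0 < C' := by positivity
  have hnear : ∀ z ∈ ball (0 : ℂ) 1, ‖z - 1‖ < δ' → ‖v z‖ ≤ C' * ‖z - 1‖ ^ 2 := by
    intro z hz hzδ
    have h1 := hf1 z hz
    have h2 := hz1 z hz
    have hb := hOb z hz (hzδ.trans_le hδ'δ)
    have hn0 : (0:ℝ) ≤ ‖z - 1‖ := norm_nonneg _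
    have hn1 : ‖z - 1‖ ≤ 1 := le_of_lt (hzδ.trans_le hδ'1)
    have hn2 : ‖z - 1‖ ≤ 1 / (2 * C) := le_of_lt (hzδ.trans_le hδ'C)
    have hnorm1z : ‖(1 : ℂ) - z‖ = ‖z - 1‖ := norm_sub_rev _ _
    have hlow : ‖z - 1‖ / 2 ≤ ‖1 - f z‖ := by
      have htri : ‖(1 : ℂ) - z‖ - ‖f z - z‖ ≤ ‖1 - f z‖ := by
        have h3 := norm_sub_norm_le ((1 : ℂ) - z) (f z - z)
        have heq : (1 : ℂ) - z - (f z - z) = 1 - f z := by ring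
        rw [heq] at h3
        linarith
      have hn2' : C * ‖z - 1‖ ≤ 1 / 2 := by
        rw [le_div_iff₀ (by positivity : (0:ℝ) < 2 * C)] at hn2
        linarith
      have ht2 : ‖z - 1‖ ^ 2 ≤ 1 := by nlinarith
      have h44 : ‖z - 1‖ ^ 4 ≤ ‖z - 1‖ ^ 2 := by
        nlinarith [mul_le_mul_of_nonneg_left ht2 (sq_nonneg ‖z - 1‖)]
      have h45 : C * ‖z - 1‖ ^ 4 ≤ C * ‖z - 1‖ ^ 2 :=
        mul_le_mul_of_nonneg_left h44 hC.le
      have hsm : C * ‖z - 1‖ ^ 4 ≤ ‖z - 1‖ / 2 := by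
        nlinarith [mul_le_mul_of_nonneg_right hn2' hn0]
      rw [hnorm1z] at htri
      linarith
    rw [hident z hz, norm_div, norm_mul, norm_mul]
    have hden0 : 0 < ‖(1:ℂ) - f z‖ * ‖(1:ℂ) - z‖ ∨ ‖(1:ℂ) - f z‖ * ‖(1:ℂ) - z‖ = 0 := by
      rcases eq_or_lt_of_le (mul_nonneg (norm_nonneg ((1:ℂ) - f z)) (norm_nonneg ((1:ℂ) - z))) with h | h
      · exact Or.inr h.symm
      · exact Or.inl h
    rcases hden0 with hden | hden
    · rw [div_le_iff₀ hden]
      have h2n : ‖(2:ℂ)‖ = 2 := by norm_num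
      rw [h2n]
      have hge : C' * ‖z - 1‖ ^ 2 * (‖(1:ℂ) - f z‖ * ‖(1:ℂ) - z‖)
          ≥ C' * ‖z - 1‖ ^ 2 * ((‖z - 1‖ / 2) * ‖z - 1‖) := by
        apply mul_le_mul_of_nonneg_left _ (by positivity)
        rw [hnorm1z]
        apply mul_le_mul_of_nonneg_right hlow hn0
      have heq2 : C' * ‖z - 1‖ ^ 2 * ((‖z - 1‖ / 2) * ‖z - 1‖) = 2 * C * ‖z - 1‖ ^ 4 := by
        rw [hC'def]; ring
      linarith
    · exfalso
      rcases mul_eq_zero.1 hden with h | h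
      · exact h1 (norm_eq_zero.1 h)
      · exact h2 (norm_eq_zero.1 h)
  clear_value δ' C'
  -- Step P : Re v ≥ 0 on the ball
  have hpos : ∀ z0 ∈ ball (0 : ℂ) 1, 0 ≤ (v z0).re := by
    intro z0 hz0
    by_contra hneg
    push_neg at hneg
    set a : ℝ := -(v z0).re with ha
    have ha0 : 0 < a := by simp only [ha]; linarith
    have hz0n : ‖z0‖ < 1 := mem_ball_zero_iff.1 hz0
    have hd1 : 0 < ‖z0 - 1‖ := by
      rw [norm_pos_iff]
      intro hc
      have hz' : z0 = 1 := by linear_combination hc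
      rw [hz'] at hz0n
      simp at hz0n
    set η : ℝ := min (Real.sqrt (a / (4 * C'))) (min δ' ‖z0 - 1‖) / 2 with hηdef
    have hsq0 : 0 < Real.sqrt (a / (4 * C')) := Real.sqrt_pos.2 (by positivity)
    have hm0 : 0 < min δ' ‖z0 - 1‖ := lt_min hδ'0 hd1
    have hη0 : 0 < η := by positivity
    have hmin1 := min_le_right (Real.sqrt (a / (4 * C'))) (min δ' ‖z0 - 1‖)
    have hmin2 := min_le_left (Real.sqrt (a / (4 * C'))) (min δ' ‖z0 - 1‖)
    have hmin3 := min_le_left δ' ‖z0 - 1‖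
    have hmin4 := min_le_right δ' ‖z0 - 1‖
    have hηδ : η < δ' := by rw [hηdef]; linarith
    have hηd : η < ‖z0 - 1‖ := by rw [hηdef]; linarith
    have hηsq : C' * η ^ 2 ≤ a / 4 := by
      have h1 : η ≤ Real.sqrt (a / (4 * C')) := by rw [hηdef]; linarith
      have h2 : Real.sqrt (a / (4 * C')) ^ 2 = a / (4 * C') :=
        Real.sq_sqrt (by positivity)
      have h3 : η ^ 2 ≤ a / (4 * C') := by nlinarith
      have h4 : C' * η ^ 2 ≤ C' * (a / (4 * C')) := by nlinarith
      have h5 : C' * (a / (4 * C')) = a / 4 := by field_simp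
      linarith
    clear_value η
    set r : ℝ := max (1 - a * η ^ 2 / 8) ((1 + ‖z0‖) / 2) with hrdef
    have hr1 : r < 1 := by
      apply max_lt
      · nlinarith [mul_pos ha0 (pow_pos hη0 2)]
      · linarith
    have hrz : ‖z0‖ < r := lt_of_lt_of_le (by linarith) (le_max_right _ _)
    have hr0 : 0 < r := lt_of_le_of_lt (norm_nonneg z0) hrz
    have hrη : 2 * (1 - r) / η ^ 2 ≤ a / 4 := by
      have h1 : 1 - a * η ^ 2 / 8 ≤ r := le_max_left _ _
      rw [div_le_iff₀ (by positivity)]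
      nlinarith
    clear_value r
    set Ω : Set ℂ := ball (0 : ℂ) r \ closedBall (1 : ℂ) η with hΩdef
    have hΩopen : IsOpen Ω := isOpen_ball.sdiff Metric.isClosed_closedBall
    have hclos : closure Ω ⊆ closedBall (0 : ℂ) r := by
      calc closure Ω ⊆ closure (ball (0 : ℂ) r) := closure_mono Set.diff_subset
      _ = closedBall (0 : ℂ) r := closure_ball _ hr0.ne'
    have hclosB : closure Ω ⊆ ball (0 : ℂ) 1 := by
      intro w hw
      rw [mem_ball_zero_iff]
      exact lt_of_le_of_lt (mem_closedBall_zero_iff.1 (hclos hw)) hr1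
    have hfar : ∀ w ∈ closure Ω, η ≤ dist w 1 := by
      intro w hw
      have h1 : closure Ω ⊆ closure ((closedBall (1 : ℂ) η)ᶜ) :=
        closure_mono (fun y hy => hy.2)
      have h2 := h1 hw
      rw [closure_compl, interior_closedBall _ hη0.ne'] at h2
      simpa [mem_ball, not_lt] using h2
    have hFdc : DiffContOnCl ℂ (fun z => Complex.exp (-v z)) Ω := by
      have hd : DifferentiableOn ℂ (fun z => Complex.exp (-v z)) (ball (0 : ℂ) 1) :=
        hvdiff.neg.cexp
      exact ⟨hd.mono (fun y hy => hclosB (subset_closure hy)),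
        hd.continuousOn.mono hclosB⟩
    have hbound : ∀ w ∈ frontier Ω,
        ‖Complex.exp (-v w)‖ ≤ Real.exp (C' * η ^ 2 + 2 * (1 - r) / η ^ 2) := by
      intro w hw
      have hwc : w ∈ closure Ω := frontier_subset_closure hw
      have hwB : w ∈ ball (0 : ℂ) 1 := hclosB hwc
      have hwr : ‖w‖ ≤ r := mem_closedBall_zero_iff.1 (hclos hwc)
      have hwη : η ≤ dist w 1 := hfar w hwc
      have hwnΩ : w ∉ Ω := by
        rw [frontier, hΩopen.interior_eq] at hw
        exact hw.2
      have hterm2 : (0:ℝ) ≤ 2 * (1 - r) / η ^ 2 := by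
        apply div_nonneg (by linarith) (by positivity)
      have hterm1 : (0:ℝ) ≤ C' * η ^ 2 := by positivity
      have hre : -(v w).re ≤ C' * η ^ 2 + 2 * (1 - r) / η ^ 2 := by
        rcases not_and_or.1 (fun hc => hwnΩ ⟨hc.1, hc.2⟩) with hcase | hcase
        · -- ‖w‖ ≥ r : use the harmonic majorant
          rw [mem_ball_zero_iff, not_lt] at hcase
          have hwrr : ‖w‖ = r := le_antisymm hwr hcase
          have hvre : (v w).re
              = ((1 + f w) / (1 - f w)).re - ((1 + w) / (1 - w)).re := by
            rw [hv]; simp [sub_re]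
          have hP : ((1 + w) / (1 - w)).re = (1 - normSq w) / normSq (1 - w) :=
            BKAux.re_cayley _ (hz1 w hwB)
          have hns : normSq w = r ^ 2 := by rw [BKAux.normSq_eq_norm_sq, hwrr]
          have hd2 : η ^ 2 ≤ normSq (1 - w) := by
            rw [BKAux.normSq_eq_norm_sq]
            have : η ≤ ‖(1:ℂ) - w‖ := by
              rw [norm_sub_rev]
              rwa [dist_eq_norm] at hwη
            nlinarith [norm_nonneg ((1:ℂ) - w)]
          have hPb : ((1 + w) / (1 - w)).re ≤ 2 * (1 - r) / η ^ 2 := by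
            rw [hP]
            have hnum0 : (0:ℝ) ≤ 1 - normSq w := by rw [hns]; nlinarith
            have h7 : (1 - normSq w) / normSq (1 - w) ≤ (1 - normSq w) / η ^ 2 :=
              div_le_div_of_nonneg_left hnum0 (by positivity) hd2
            have h8 : (1 - normSq w) / η ^ 2 ≤ 2 * (1 - r) / η ^ 2 := by
              apply div_le_div_of_nonneg_right ?_ (by positivity)
              rw [hns]; nlinarith
            linarith
          have := hu_re w hwB
          rw [hvre] at *
          linarith
        · -- w is on the small circle around 1
          have hw1 : w ∈ closedBall (1:ℂ) η := not_not.1 hcase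
          have hd3 : ‖w - 1‖ ≤ η := by rwa [mem_closedBall, dist_eq_norm] at hw1
          have h5 : -(v w).re ≤ ‖v w‖ := by
            exact (neg_le_abs _).trans (Complex.abs_re_le_norm _)
          have h6 : ‖v w‖ ≤ C' * η ^ 2 := by
            have h8 := hnear w hwB (lt_of_le_of_lt hd3 hηδ)
            have h9 : ‖w - 1‖ ^ 2 ≤ η ^ 2 := by
              nlinarith [norm_nonneg (w - 1), mul_le_mul hd3 hd3 (norm_nonneg (w - 1)) hη0.le]
            have h7 : C' * ‖w - 1‖ ^ 2 ≤ C' * η ^ 2 :=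
              mul_le_mul_of_nonneg_left h9 hC'0.le
            linarith
          linarith
      calc ‖Complex.exp (-v w)‖ = Real.exp ((-v w).re) := by
            rw [Complex.norm_exp]
      _ ≤ _ := by
            rw [Real.exp_le_exp]
            simpa using hre
    have hz0Ω : z0 ∈ closure Ω := by
      apply subset_closure
      constructor
      · exact mem_ball_zero_iff.2 hrz
      · intro hc
        rw [mem_closedBall, dist_eq_norm] at hc
        exact absurd hc (not_le.2 hηd)
    have hbdd : Bornology.IsBounded Ω := (isBounded_ball).subset Set.diff_subset
    have hmax := Complex.norm_le_of_forall_mem_frontier_norm_le hbdd hFdc hbound hz0Ω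
    rw [Complex.norm_exp, Real.exp_le_exp] at hmax
    simp only [neg_re] at hmax
    linarith
  -- Step G : v vanishes identically
  intro z0 hz0B
  have hz0n : ‖z0‖ < 1 := mem_ball_zero_iff.1 hz0B
  have hnsq1 : normSq z0 < 1 := BKAux.normSq_lt_one hz0n
  set k : ℝ := (1 - normSq z0) / 8 with hkdef
  have hk0 : 0 < k := by
    rw [hkdef]
    have h1 : 0 < 1 - normSq z0 := by linarith
    positivity
  set T : ℂ → ℂ := fun ζ => (ζ + z0) / (1 + (starRingEnd ℂ) z0 * ζ) with hT
  have hTd : DifferentiableOn ℂ T (ball (0:ℂ) 1) := by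
    apply DifferentiableOn.div
    · exact (differentiable_id.add_const z0).differentiableOn
    · exact ((differentiable_const (1:ℂ)).add
        ((differentiable_const ((starRingEnd ℂ) z0)).mul differentiable_id)).differentiableOn
    · intro ζ hζ
      exact BKAux.mobius_den_ne hz0n (mem_ball_zero_iff.1 hζ)
  have hTmaps : Set.MapsTo T (ball (0:ℂ) 1) (ball (0:ℂ) 1) := by
    intro ζ hζ
    rw [mem_ball_zero_iff, hT]
    simp only
    rw [norm_div]
    have hlt := BKAux.mobius_mapsTo hz0n (mem_ball_zero_iff.1 hζ)
    exact (div_lt_one ((norm_nonneg _).trans_lt hlt)).2 hlt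
  have hT0 : T 0 = z0 := by rw [hT]; simp
  have hkey : ∀ s : ℝ, 0 < s → s < min δ' 1 → ‖v z0‖ * (s * k) ≤ 2 * (C' * s ^ 2) := by
    intro s hs0 hs1
    have hsδ : s < δ' := lt_of_lt_of_le hs1 (min_le_left _ _)
    have hs1' : s < 1 := lt_of_lt_of_le hs1 (min_le_right _ _)
    have hsk0 : 0 < s * k := mul_pos hs0 hk0
    refine BKAux.le_add_all (fun ε0 hε0 => ?_)
    have h30 : (0:ℝ) < 3 + s * k := by linarith
    set ε : ℝ := ε0 / (3 + s * k) with hεdef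
    have hε : 0 < ε := div_pos hε0 h30
    have hεb : ε * (3 + s * k) = ε0 := by rw [hεdef]; field_simp
    set x : ℝ := 1 - s with hxdef
    have hx0 : 0 ≤ x := by rw [hxdef]; linarith
    have hx1 : x < 1 := by rw [hxdef]; linarith
    set w : ℂ → ℂ := fun ζ => v (T ζ) + (ε : ℂ) with hw
    have hwd : DifferentiableOn ℂ w (ball (0:ℂ) 1) := (hvdiff.comp hTd hTmaps).add_const _
    have hwre : ∀ ζ ∈ ball (0:ℂ) 1, 0 < (w ζ).re := by
      intro ζ hζ
      rw [hw]
      simp only [add_re, ofReal_re]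
      have := hpos (T ζ) (hTmaps hζ)
      linarith
    have hgrow := BKAux.growth hwd hwre
    obtain ⟨hζx1, hζx2⟩ := BKAux.zeta_facts hz0n hx0 hx1
    set ζx : ℂ := ((x:ℂ) - z0) / (1 - (starRingEnd ℂ) z0 * (x:ℂ)) with hζxdef
    have hζxB : ζx ∈ ball (0:ℂ) 1 := mem_ball_zero_iff.2 hζx1
    have h1 := hgrow ζx hζxB
    have hTx : T ζx = (x : ℂ) := by
      rw [hT, hζxdef]
      exact BKAux.T_zeta_eq hz0n hx0 hx1
    rw [hw] at h1
    simp only at h1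
    rw [hT0, hTx] at h1
    have hxB : ((x:ℝ):ℂ) ∈ ball (0:ℂ) 1 := by
      rw [mem_ball_zero_iff, Complex.norm_real, Real.norm_eq_abs, _root_.abs_of_nonneg hx0]
      exact hx1
    have hxd : ‖((x:ℝ):ℂ) - 1‖ = s := by
      have h9 : ((x:ℝ):ℂ) - 1 = ((x - 1 : ℝ) : ℂ) := by push_cast; ring
      rw [h9, Complex.norm_real, Real.norm_eq_abs, abs_of_nonpos (by linarith : x - 1 ≤ 0)]
      rw [hxdef]; ring
    have hvx : ‖v ((x:ℝ):ℂ)‖ ≤ C' * s ^ 2 := by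
      have h9 := hnear _ hxB (by rw [hxd]; exact hsδ)
      rw [hxd] at h9
      exact h9
    have htr1 : ‖v ((x:ℝ):ℂ) + (ε:ℂ)‖ ≤ C' * s ^ 2 + ε := by
      calc ‖v ((x:ℝ):ℂ) + (ε:ℂ)‖ ≤ ‖v ((x:ℝ):ℂ)‖ + ‖(ε:ℂ)‖ := norm_add_le _ _
      _ ≤ C' * s ^ 2 + ε := by
          rw [Complex.norm_real, Real.norm_eq_abs, _root_.abs_of_nonneg hε.le]
          linarith
    have htr2 : ‖v z0‖ ≤ ‖v z0 + (ε:ℂ)‖ + ε := by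
      have h9 : v z0 = (v z0 + (ε:ℂ)) - (ε:ℂ) := by ring
      calc ‖v z0‖ = ‖(v z0 + (ε:ℂ)) - (ε:ℂ)‖ := by rw [← h9]
      _ ≤ ‖v z0 + (ε:ℂ)‖ + ‖(ε:ℂ)‖ := norm_sub_le _ _
      _ = ‖v z0 + (ε:ℂ)‖ + ε := by
          rw [Complex.norm_real, Real.norm_eq_abs, _root_.abs_of_nonneg hε.le]
    have hsk : s * k ≤ 1 - ‖ζx‖ := by
      have h9 : (1 - x) = s := by rw [hxdef]; ring
      have h10 : s * k = (1 - x) * (1 - normSq z0) / 8 := by rw [h9, hkdef]; ring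
      rw [h10]
      exact hζx2
    have hc1 : ‖v z0‖ * (s * k) ≤ (‖v z0 + (ε:ℂ)‖ + ε) * (s * k) :=
      mul_le_mul_of_nonneg_right htr2 hsk0.le
    have hc2 : ‖v z0 + (ε:ℂ)‖ * (s * k) ≤ ‖v z0 + (ε:ℂ)‖ * (1 - ‖ζx‖) :=
      mul_le_mul_of_nonneg_left hsk (norm_nonneg _)
    nlinarith [hc1, hc2, h1, htr1, hεb, hsk0.le, hε.le, norm_nonneg (v z0 + (ε:ℂ))]
  have hvz0 : v z0 = 0 := by
    have hkk : ∀ s : ℝ, 0 < s → s < min δ' 1 → ‖v z0‖ * k ≤ 2 * C' * s := by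
      intro s hs0 hs1
      have h9 := hkey s hs0 hs1
      have h2 : (‖v z0‖ * k) * s ≤ (2 * C' * s) * s := by nlinarith [h9]
      exact le_of_mul_le_mul_right h2 hs0
    have hle0 : ‖v z0‖ * k ≤ 0 := by
      refine BKAux.le_add_all (fun ε hε => ?_)
      have hm0' : 0 < min δ' 1 := lt_min hδ'0 one_pos
      set s : ℝ := min (ε / (2 * C')) (min δ' 1) / 2 with hsdef
      have hmle1 := min_le_left (ε / (2 * C')) (min δ' 1)
      have hmle2 := min_le_right (ε / (2 * C')) (min δ' 1)
      have hmpos : 0 < min (ε / (2 * C')) (min δ' 1) := lt_min (by positivity) hm0'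
      have hs0 : 0 < s := by rw [hsdef]; linarith
      have hs1 : s < min δ' 1 := by rw [hsdef]; linarith
      have hs2 : 2 * C' * s ≤ ε := by
        have h3 : s ≤ ε / (2 * C') := by rw [hsdef]; linarith
        have h4 : 2 * C' * s ≤ 2 * C' * (ε / (2 * C')) :=
          mul_le_mul_of_nonneg_left h3 (by linarith)
        have h5 : 2 * C' * (ε / (2 * C')) = ε := by field_simp
        linarith
      have h6 := hkk s hs0 hs1
      linarith
    have h7 : ‖v z0‖ ≤ 0 := by nlinarith [norm_nonneg (v z0), hk0]
    exact norm_eq_zero.1 (le_antisymm h7 (norm_nonneg _))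
  have hid := hident z0 hz0B
  rw [hvz0] at hid
  have hden := mul_ne_zero (hf1 z0 hz0B) (hz1 z0 hz0B)
  rcases div_eq_zero_iff.1 hid.symm with h0 | h0
  · linear_combination h0 / 2
  · exact absurd h0 hden
end

section
/- Let φ be holomorphic on the open unit disc D and continuous on the closed unit disc, nonvanishing on a neighborhood of the unit circle ∂D (intersected with the closed disc), with distinct zeros α_1,…,α_k ∈ D of multiplicities s_1,…,s_k. For τ ∈ ∂D let ν_τ denote the sum of those s_j for which (1 + α_j)/(1 + conj(α_j)) = τ. Then there exists a function f, holomorphic on D and continuous on the closed unit disc, such that: (i) |f(z)| < |φ(z)| for all z ∈ ∂D except finitely many points; (ii) for every τ ∈ ∂D, f(z) = φ(z) + O(|z − τ|^{2 ν_τ}) as z → τ within D; and (iii) f(z) = φ(z) + O(|z − 1|^{2 ν_1 + 1}) as z → 1 within D. -/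
open Metric

set_option maxHeartbeats 2000000 in
open Classical in
/-- **Sharpness of the boundary exponents.** Let `φ` be holomorphic on the unit disc,
continuous on the closed disc, nonvanishing on a neighborhood of the unit circle
(intersected with the closed disc), with distinct zeros `α j ∈ D` of multiplicities
`sj j` (encoded by a factorization `φ = ∏ (z - α j)^(sj j) * u` with `u` nonvanishing
on the disc). For `τ ∈ ∂D` put `ν τ = ∑` of those `sj j` with
`(1 + α j)/(1 + conj (α j)) = τ`. Then some `f`, holomorphic on the disc and continuous
on the closed disc, satisfies `|f| < |φ|` on the circle except finitely many points,
`f(z) = φ(z) + O(|z - τ|^(2 ν τ))` at every `τ ∈ ∂D`, and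
`f(z) = φ(z) + O(|z - 1|^(2 ν 1 + 1))` at `1`. -/
theorem sharpness_of_exponents
    (k : ℕ) (φ : ℂ → ℂ)
    (hφd : DifferentiableOn ℂ φ (ball (0 : ℂ) 1))
    (hφc : ContinuousOn φ (closedBall (0 : ℂ) 1))
    (hnv : ∃ r : ℝ, r < 1 ∧ ∀ z ∈ closedBall (0 : ℂ) 1, r < ‖z‖ → φ z ≠ 0)
    (α : Fin k → ℂ) (hαD : ∀ j, α j ∈ ball (0 : ℂ) 1)
    (hαinj : Function.Injective α)
    (sj : Fin k → ℕ) (hsj : ∀ j, 0 < sj j)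
    (u : ℂ → ℂ)
    (hud : DifferentiableOn ℂ u (ball (0 : ℂ) 1))
    (hu0 : ∀ z ∈ ball (0 : ℂ) 1, u z ≠ 0)
    (hfact : ∀ z ∈ ball (0 : ℂ) 1, φ z = (∏ j, (z - α j) ^ sj j) * u z) :
    ∃ f : ℂ → ℂ,
      DifferentiableOn ℂ f (ball (0 : ℂ) 1) ∧
      ContinuousOn f (closedBall (0 : ℂ) 1) ∧
      (∃ S : Finset ℂ, ∀ z ∈ sphere (0 : ℂ) 1, z ∉ S → ‖f z‖ < ‖φ z‖) ∧
      (∀ τ ∈ sphere (0 : ℂ) 1, ∃ C > (0 : ℝ), ∃ δ > (0 : ℝ), ∀ z ∈ ball (0 : ℂ) 1,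
        ‖z - τ‖ < δ → ‖f z - φ z‖ ≤ C * ‖z - τ‖ ^
          (2 * ∑ j ∈ Finset.univ.filter
            (fun j => (1 + α j) / (1 + (starRingEnd ℂ) (α j)) = τ), sj j)) ∧
      (∃ C > (0 : ℝ), ∃ δ > (0 : ℝ), ∀ z ∈ ball (0 : ℂ) 1,
        ‖z - 1‖ < δ → ‖f z - φ z‖ ≤ C * ‖z - 1‖ ^
          (2 * (∑ j ∈ Finset.univ.filter
            (fun j => (1 + α j) / (1 + (starRingEnd ℂ) (α j)) = 1), sj j) + 1)) := by
  classical
  obtain ⟨r, hr1, hrnv⟩ := hnv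
  have hα1 : ∀ j, ‖α j‖ < 1 := fun j => by
    simpa [mem_ball, dist_zero_right] using hαD j
  -- a uniform bound `A < 1` on the `‖α j‖`
  obtain ⟨A, hA0, hA1, hAj⟩ : ∃ A : ℝ, 0 ≤ A ∧ A < 1 ∧ ∀ j, ‖α j‖ ≤ A := by
    set B : NNReal := Finset.univ.sup fun j => ‖α j‖₊ with hB
    refine ⟨(B : ℝ), B.coe_nonneg, ?_, ?_⟩
    · have h : B < 1 := by
        rw [hB, Finset.sup_lt_iff (by norm_num : (⊥ : NNReal) < 1)]
        intro j _
        exact_mod_cast hα1 j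
      exact_mod_cast h
    · intro j
      have h := Finset.le_sup (f := fun j => ‖α j‖₊) (Finset.mem_univ j)
      rw [← hB] at h
      exact_mod_cast h
  set ρ : ℝ := (1 + A) / 2 with hρdef
  have hAρ : A < ρ := by rw [hρdef]; linarith
  have hρ1 : ρ < 1 := by rw [hρdef]; linarith
  -- the boundary points
  set τ : Fin k → ℂ := fun j => (1 + α j) / (1 + (starRingEnd ℂ) (α j)) with hτdef
  have hαne : ∀ j, (1 : ℂ) + α j ≠ 0 := by
    intro j h
    have h2 : ‖α j‖ = 1 := by
      have h3 : α j = -1 := by linear_combination h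
      simp [h3]
    exact absurd h2 (ne_of_lt (hα1 j))
  have hαcne : ∀ j, (1 : ℂ) + (starRingEnd ℂ) (α j) ≠ 0 := by
    intro j h
    apply hαne j
    have h2 := congrArg (starRingEnd ℂ) h
    simpa using h2
  have hτ1 : ∀ j, ‖τ j‖ = 1 := by
    intro j
    have h1 : ‖(1 : ℂ) + (starRingEnd ℂ) (α j)‖ = ‖(1 : ℂ) + α j‖ := by
      rw [show (1 : ℂ) + (starRingEnd ℂ) (α j) = (starRingEnd ℂ) (1 + α j) by simp]
      exact RCLike.norm_conj _
    simp only [hτdef]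
    rw [norm_div, h1, div_self (norm_ne_zero_iff.2 (hαne j))]
  -- main objects
  set N : ℕ := ∑ j, sj j with hNdef
  set Pi0 : ℂ → ℂ := fun z => ∏ j, (z - α j) ^ sj j with hPi0def
  set Q : ℂ → ℂ := fun z => ∏ j, (z - τ j) ^ (2 * sj j) with hQdef
  set P : ℂ → ℂ := fun z => ∏ j, (1 - (starRingEnd ℂ) (α j) * z) ^ sj j with hPdef
  set Cc : ℂ := ∏ j, (-τ j) ^ sj j with hCdef
  set Rr : ℂ → ℝ := fun z => ∏ j, (Complex.normSq (z - τ j)) ^ sj j with hRdef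
  set ut : ℂ → ℂ := fun z => if ‖z‖ ≤ ρ then u z else φ z / Pi0 z with hutdef
  have hPi0ne : ∀ z : ℂ, ρ ≤ ‖z‖ → Pi0 z ≠ 0 := by
    intro z hz
    simp only [hPi0def]
    rw [Finset.prod_ne_zero_iff]
    intro j _
    apply pow_ne_zero
    intro h
    have h2 : z = α j := sub_eq_zero.1 h
    rw [h2] at hz
    linarith [hAj j]
  have hut_ball : ∀ z ∈ ball (0 : ℂ) 1, ut z = u z := by
    intro z hz
    by_cases h : ‖z‖ ≤ ρ
    · simp only [hutdef, if_pos h]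
    · push_neg at h
      simp only [hutdef, if_neg (not_le.2 h)]
      rw [show φ z = Pi0 z * u z from hfact z hz]
      exact mul_div_cancel_left₀ _ (hPi0ne z h.le)
  have hut_out : ∀ z : ℂ, ρ < ‖z‖ → ut z = φ z / Pi0 z := fun z hz => by
    simp only [hutdef, if_neg (not_le.2 hz)]
  have hfactS : ∀ z : ℂ, ‖z‖ = 1 → φ z = Pi0 z * ut z := by
    intro z hz
    rw [hut_out z (by rw [hz]; exact hρ1), mul_comm,
      div_mul_cancel₀ _ (hPi0ne z (by rw [hz]; exact hρ1.le))]
  have hφS : ∀ z : ℂ, ‖z‖ = 1 → φ z ≠ 0 := by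
    intro z hz
    exact hrnv z (mem_closedBall_zero_iff.2 hz.le) (by rw [hz]; exact hr1)
  have hutS : ∀ z : ℂ, ‖z‖ = 1 → ut z ≠ 0 := by
    intro z hz
    rw [hut_out z (by rw [hz]; exact hρ1)]
    exact div_ne_zero (hφS z hz) (hPi0ne z (by rw [hz]; exact hρ1.le))
  -- continuity of ut on the closed disc
  have hutc : ContinuousOn ut (closedBall (0 : ℂ) 1) := by
    have hS1 : IsClosed {z : ℂ | ‖z‖ ≤ ρ} := isClosed_le continuous_norm continuous_const
    have hS2 : IsClosed ({z : ℂ | ρ ≤ ‖z‖} ∩ closedBall (0 : ℂ) 1) :=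
      (isClosed_le continuous_const continuous_norm).inter isClosed_closedBall
    have hc1 : ContinuousOn ut {z : ℂ | ‖z‖ ≤ ρ} := by
      refine ((hud.continuousOn).mono ?_).congr ?_
      · intro z hz
        exact mem_ball_zero_iff.2 (lt_of_le_of_lt hz hρ1)
      · intro z hz
        simp only [hutdef]
        exact if_pos hz
    have hc2 : ContinuousOn ut ({z : ℂ | ρ ≤ ‖z‖} ∩ closedBall (0 : ℂ) 1) := by
      have hPi0c : Continuous Pi0 := by
        simp only [hPi0def]
        exact continuous_finset_prod _ fun j _ => (continuous_id.sub continuous_const).pow _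
      have hcd : ContinuousOn (fun z => φ z / Pi0 z)
          ({z : ℂ | ρ ≤ ‖z‖} ∩ closedBall (0 : ℂ) 1) := by
        apply ContinuousOn.div (hφc.mono Set.inter_subset_right) (hPi0c.continuousOn)
        intro z hz
        exact hPi0ne z hz.1
      refine hcd.congr ?_
      intro z hz
      rcases lt_or_eq_of_le (show ρ ≤ ‖z‖ from hz.1) with h | h
      · exact hut_out z h
      · have hzball : z ∈ ball (0 : ℂ) 1 := mem_ball_zero_iff.2 (by rw [← h]; exact hρ1)
        have hne : Pi0 z ≠ 0 := hPi0ne z hz.1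
        simp only [hutdef, if_pos (le_of_eq h.symm)]
        rw [eq_div_iff hne, mul_comm]
        exact (hfact z hzball).symm
    intro x hx
    have hsub : closedBall (0 : ℂ) 1 ⊆
        {z : ℂ | ‖z‖ ≤ ρ} ∪ ({z : ℂ | ρ ≤ ‖z‖} ∩ closedBall (0 : ℂ) 1) := by
      intro z hz
      rcases le_total ‖z‖ ρ with h | h
      · exact Or.inl h
      · exact Or.inr ⟨h, hz⟩
    have h1 : ContinuousWithinAt ut {z : ℂ | ‖z‖ ≤ ρ} x := by
      by_cases h : x ∈ {z : ℂ | ‖z‖ ≤ ρ}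
      · exact hc1 x h
      · exact continuousWithinAt_of_notMem_closure (by rwa [hS1.closure_eq])
    have h2 : ContinuousWithinAt ut ({z : ℂ | ρ ≤ ‖z‖} ∩ closedBall (0 : ℂ) 1) x := by
      by_cases h : x ∈ {z : ℂ | ρ ≤ ‖z‖} ∩ closedBall (0 : ℂ) 1
      · exact hc2 x h
      · exact continuousWithinAt_of_notMem_closure (by rwa [hS2.closure_eq])
    exact (h1.union h2).mono hsub
  -- continuity / differentiability of the polynomial pieces
  have hQcont : Continuous Q := by
    simp only [hQdef]
    exact continuous_finset_prod _ fun j _ => (continuous_id.sub continuous_const).pow _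
  have hPcont : Continuous P := by
    simp only [hPdef]
    exact continuous_finset_prod _ fun j _ =>
      (continuous_const.sub (continuous_const.mul continuous_id)).pow _
  have hPne : ∀ z ∈ closedBall (0 : ℂ) 1, P z ≠ 0 := by
    intro z hz
    simp only [hPdef]
    rw [Finset.prod_ne_zero_iff]
    intro j _
    apply pow_ne_zero
    intro h
    have h1 : (1 : ℂ) = (starRingEnd ℂ) (α j) * z := sub_eq_zero.1 h
    have h2 : ‖(starRingEnd ℂ) (α j) * z‖ < 1 := by
      rw [norm_mul, RCLike.norm_conj]
      have hz1 : ‖z‖ ≤ 1 := mem_closedBall_zero_iff.1 hz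
      calc ‖α j‖ * ‖z‖ ≤ A * 1 := mul_le_mul (hAj j) hz1 (norm_nonneg z) hA0
        _ < 1 := by linarith
    rw [← h1] at h2
    simp at h2
  -- unit-circle algebraic identities
  have hzsq : ∀ z : ℂ, ‖z‖ = 1 → z * (starRingEnd ℂ) z = 1 := by
    intro z hz
    rw [Complex.mul_conj]
    simp [Complex.normSq_eq_norm_sq, hz]
  have hnormSq1 : ∀ z : ℂ, ‖z‖ = 1 → Complex.normSq z = 1 := by
    intro z hz
    rw [Complex.normSq_eq_norm_sq, hz, one_pow]
  have hQz : ∀ z : ℂ, ‖z‖ = 1 → Q z = Cc * z ^ N * ((Rr z : ℝ) : ℂ) := by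
    intro z hz
    have hzc := hzsq z hz
    have hfac : ∀ j : Fin k, (z - τ j) ^ (2 * sj j)
        = (-τ j) ^ sj j * z ^ sj j * ((Complex.normSq (z - τ j) : ℝ) : ℂ) ^ sj j := by
      intro j
      have hτc : τ j * (starRingEnd ℂ) (τ j) = 1 := hzsq (τ j) (hτ1 j)
      have h2 : (z - τ j) ^ 2 = -τ j * z * ((Complex.normSq (z - τ j) : ℝ) : ℂ) := by
        have hn : ((Complex.normSq (z - τ j) : ℝ) : ℂ)
            = (z - τ j) * ((starRingEnd ℂ) z - (starRingEnd ℂ) (τ j)) := by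
          rw [← map_sub]; exact (Complex.mul_conj _).symm
        rw [hn]
        linear_combination (z * τ j - (τ j) ^ 2) * hzc + (τ j * z - z ^ 2) * hτc
      calc (z - τ j) ^ (2 * sj j) = ((z - τ j) ^ 2) ^ sj j := by rw [pow_mul]
        _ = _ := by rw [h2, mul_pow, mul_pow]
    simp only [hQdef]
    rw [Finset.prod_congr rfl fun j _ => hfac j, Finset.prod_mul_distrib,
      Finset.prod_mul_distrib, Finset.prod_pow_eq_pow_sum]
    simp only [hCdef, hNdef, hRdef]
    push_cast
    ring
  have hPz : ∀ z : ℂ, ‖z‖ = 1 →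
      (starRingEnd ℂ) (φ z) * z ^ N = P z * (starRingEnd ℂ) (ut z) := by
    intro z hz
    have hzc := hzsq z hz
    rw [hfactS z hz, map_mul]
    have h1 : (starRingEnd ℂ) (Pi0 z) * z ^ N = P z := by
      simp only [hPi0def, hPdef, map_prod, map_pow, map_sub, hNdef]
      rw [← Finset.prod_pow_eq_pow_sum, ← Finset.prod_mul_distrib]
      refine Finset.prod_congr rfl fun j _ => ?_
      rw [← mul_pow]
      congr 1
      linear_combination hzc
    calc (starRingEnd ℂ) (Pi0 z) * (starRingEnd ℂ) (ut z) * z ^ N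
        = ((starRingEnd ℂ) (Pi0 z) * z ^ N) * (starRingEnd ℂ) (ut z) := by ring
      _ = P z * (starRingEnd ℂ) (ut z) := by rw [h1]
  have hCsq : Complex.normSq Cc = 1 := by
    have h1 : ∀ j : Fin k, Complex.normSq (-τ j) = 1 := fun j => by
      rw [Complex.normSq_neg, hnormSq1 (τ j) (hτ1 j)]
    simp only [hCdef, map_prod, map_pow]
    simp [h1]
  have hCC : (starRingEnd ℂ) Cc * Cc = 1 := by
    rw [mul_comm, Complex.mul_conj, hCsq]
    norm_num
  -- the perturbation g
  set g : ℂ → ℂ := fun z => (starRingEnd ℂ) Cc * ((1 - z) * Q z * ut z / P z) with hgdef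
  have hgφ : ∀ z : ℂ, ‖z‖ = 1 →
      g z * (starRingEnd ℂ) (φ z) = ((Rr z * Complex.normSq (ut z) : ℝ) : ℂ) * (1 - z) := by
    intro z hz
    have hz0 : z ≠ 0 := by
      intro h; rw [h] at hz; simp at hz
    have hPzne : P z ≠ 0 := hPne z (mem_closedBall_zero_iff.2 hz.le)
    have hQ := hQz z hz
    have hP := hPz z hz
    have hu' : ut z * (starRingEnd ℂ) (ut z) = ((Complex.normSq (ut z) : ℝ) : ℂ) :=
      Complex.mul_conj _
    have key : ((starRingEnd ℂ) Cc * ((1 - z) * Q z * ut z) * (starRingEnd ℂ) (φ z)) * z ^ N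
        = (((Rr z * Complex.normSq (ut z) : ℝ) : ℂ) * (1 - z) * P z) * z ^ N := by
      push_cast
      linear_combination ((starRingEnd ℂ) Cc * ((1 - z) * Q z * ut z)) * hP
        + ((starRingEnd ℂ) Cc * ((1 - z) * ut z * (starRingEnd ℂ) (ut z) * P z)) * hQ
        + ((1 - z) * ut z * (starRingEnd ℂ) (ut z) * P z * z ^ N * ((Rr z : ℝ) : ℂ)) * hCC
        + ((1 - z) * P z * z ^ N * ((Rr z : ℝ) : ℂ)) * hu'
    have key2 : (starRingEnd ℂ) Cc * ((1 - z) * Q z * ut z) * (starRingEnd ℂ) (φ z)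
        = ((Rr z * Complex.normSq (ut z) : ℝ) : ℂ) * (1 - z) * P z :=
      mul_right_cancel₀ (pow_ne_zero N hz0) key
    have hsplit : g z * (starRingEnd ℂ) (φ z)
        = ((starRingEnd ℂ) Cc * ((1 - z) * Q z * ut z) * (starRingEnd ℂ) (φ z)) / P z := by
      simp only [hgdef]; ring
    rw [hsplit, key2, mul_div_assoc, div_self hPzne, mul_one]
  have hgsq : ∀ z : ℂ, ‖z‖ = 1 → Complex.normSq (g z)
      = Rr z ^ 2 * Complex.normSq (ut z) * Complex.normSq (1 - z) / Complex.normSq (P z) := by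
    intro z hz
    have hQ := hQz z hz
    have hzn := hnormSq1 z hz
    simp only [hgdef]
    rw [map_mul, map_div₀, Complex.normSq_conj, hCsq, one_mul, map_mul, map_mul, hQ,
      map_mul, map_mul, map_pow, hzn, hCsq, Complex.normSq_ofReal]
    ring
  have h1z : ∀ z : ℂ, ‖z‖ = 1 → Complex.normSq (1 - z) = 2 * (1 - z.re) := by
    intro z hz
    have hzn := hnormSq1 z hz
    rw [Complex.normSq_apply] at hzn ⊢
    simp only [Complex.sub_re, Complex.sub_im, Complex.one_re, Complex.one_im]
    linear_combination hzn
  -- quantitative bounds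
  have hRnn : ∀ z : ℂ, 0 ≤ Rr z := fun z =>
    Finset.prod_nonneg fun j _ => pow_nonneg (Complex.normSq_nonneg _) _
  have hRle : ∀ z ∈ closedBall (0 : ℂ) 1, Rr z ≤ 4 ^ N := by
    intro z hz
    have hz1 : ‖z‖ ≤ 1 := mem_closedBall_zero_iff.1 hz
    simp only [hRdef, hNdef]
    rw [← Finset.prod_pow_eq_pow_sum]
    apply Finset.prod_le_prod
    · intro j _
      exact pow_nonneg (Complex.normSq_nonneg _) _
    · intro j _
      apply pow_le_pow_left₀ (Complex.normSq_nonneg _)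
      rw [Complex.normSq_eq_norm_sq]
      nlinarith [norm_sub_le z (τ j), hτ1 j, norm_nonneg (z - τ j)]
  have hp1 : (0 : ℝ) < (1 - A) ^ N := pow_pos (by linarith) N
  have hPlb : ∀ z ∈ closedBall (0 : ℂ) 1, (1 - A) ^ N ≤ ‖P z‖ := by
    intro z hz
    have hz1 : ‖z‖ ≤ 1 := mem_closedBall_zero_iff.1 hz
    simp only [hPdef, hNdef]
    rw [norm_prod, ← Finset.prod_pow_eq_pow_sum]
    apply Finset.prod_le_prod
    · intro j _
      apply pow_nonneg; linarith
    · intro j _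
      rw [norm_pow]
      apply pow_le_pow_left₀ (by linarith)
      have h1 : ‖(starRingEnd ℂ) (α j) * z‖ ≤ A := by
        rw [norm_mul, RCLike.norm_conj]
        calc ‖α j‖ * ‖z‖ ≤ A * 1 := mul_le_mul (hAj j) hz1 (norm_nonneg z) hA0
          _ = A := mul_one A
      calc 1 - A ≤ 1 - ‖(starRingEnd ℂ) (α j) * z‖ := by linarith
        _ = ‖(1 : ℂ)‖ - ‖(starRingEnd ℂ) (α j) * z‖ := by rw [norm_one]
        _ ≤ ‖1 - (starRingEnd ℂ) (α j) * z‖ := norm_sub_norm_le _ _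
  have hPlb2 : ∀ z ∈ closedBall (0 : ℂ) 1, (1 - A) ^ (2 * N) ≤ Complex.normSq (P z) := by
    intro z hz
    rw [Complex.normSq_eq_norm_sq]
    calc (1 - A) ^ (2 * N) = ((1 - A) ^ N) ^ 2 := by rw [← pow_mul, mul_comm]
      _ ≤ ‖P z‖ ^ 2 := pow_le_pow_left₀ hp1.le (hPlb z hz) 2
  -- choice of ε
  set ε : ℝ := (1 - A) ^ (2 * N) / (2 * 4 ^ N) with hεdef
  have hε0 : 0 < ε := by
    apply div_pos (pow_pos (by linarith) _) (by positivity)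
  have hεRr : ∀ z ∈ closedBall (0 : ℂ) 1, 2 * (ε * Rr z) ≤ (1 - A) ^ (2 * N) := by
    intro z hz
    have h1 := hRle z hz
    have h2 := hRnn z
    have h4 : (0 : ℝ) < 4 ^ N := by positivity
    have h5 : (0 : ℝ) ≤ (1 - A) ^ (2 * N) := pow_nonneg (by linarith) _
    rw [hεdef]
    rw [div_mul_eq_mul_div, mul_div_assoc]
    have h6 : Rr z / (2 * 4 ^ N) ≤ 1 / 2 := by
      rw [div_le_div_iff₀ (by positivity) (by norm_num)]
      nlinarith
    nlinarith
  -- uniform bound on Mu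
  obtain ⟨Mu0, hMu0⟩ := (isCompact_closedBall (0 : ℂ) 1).exists_bound_of_continuousOn hutc
  set Mu : ℝ := max Mu0 1 with hMudef
  have hMu1 : (1 : ℝ) ≤ Mu := le_max_right _ _
  have hMu : ∀ z ∈ closedBall (0 : ℂ) 1, ‖ut z‖ ≤ Mu := fun z hz =>
    le_trans (hMu0 z hz) (le_max_left _ _)
  -- the master pointwise bound on g
  have hgb : ∀ t : ℂ, ∀ z ∈ closedBall (0 : ℂ) 1,
      ‖g z‖ ≤ ‖z - 1‖ * ‖z - t‖ ^ (2 * ∑ j ∈ Finset.univ.filter (fun j => τ j = t), sj j)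
        * 4 ^ N * Mu / (1 - A) ^ N := by
    intro t z hz
    have hz1 : ‖z‖ ≤ 1 := mem_closedBall_zero_iff.1 hz
    have hCn : ‖(starRingEnd ℂ) Cc‖ = 1 := by
      rw [RCLike.norm_conj]
      simp only [hCdef]
      rw [norm_prod, Finset.prod_congr rfl
        (fun j _ => by rw [norm_pow, norm_neg, hτ1 j, one_pow])]
      exact Finset.prod_const_one
    have hQb : ‖Q z‖ ≤ ‖z - t‖ ^ (2 * ∑ j ∈ Finset.univ.filter (fun j => τ j = t), sj j)
        * 4 ^ N := by
      simp only [hQdef]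
      rw [norm_prod,
        ← Finset.prod_filter_mul_prod_filter_not Finset.univ (fun j => τ j = t)]
      have h1 : ∏ j ∈ Finset.univ.filter (fun j => τ j = t), ‖(z - τ j) ^ (2 * sj j)‖
          = ‖z - t‖ ^ (2 * ∑ j ∈ Finset.univ.filter (fun j => τ j = t), sj j) := by
        rw [Finset.prod_congr rfl (fun j hj => by
          rw [norm_pow, (Finset.mem_filter.1 hj).2]), Finset.prod_pow_eq_pow_sum]
        congr 1
        rw [Finset.mul_sum]
      have h2 : ∏ j ∈ Finset.univ.filter (fun j => ¬ τ j = t), ‖(z - τ j) ^ (2 * sj j)‖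
          ≤ 4 ^ N := by
        calc ∏ j ∈ Finset.univ.filter (fun j => ¬ τ j = t), ‖(z - τ j) ^ (2 * sj j)‖
            ≤ ∏ j ∈ Finset.univ.filter (fun j => ¬ τ j = t), (4 : ℝ) ^ sj j := by
              apply Finset.prod_le_prod
              · intro j _; positivity
              · intro j _
                rw [norm_pow, pow_mul]
                apply pow_le_pow_left₀ (by positivity)
                nlinarith [norm_sub_le z (τ j), hτ1 j, norm_nonneg (z - τ j)]
          _ = 4 ^ (∑ j ∈ Finset.univ.filter (fun j => ¬ τ j = t), sj j) :=
              Finset.prod_pow_eq_pow_sum _ _ _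
          _ ≤ 4 ^ N := by
              apply pow_le_pow_right₀ (by norm_num : (1 : ℝ) ≤ 4)
              rw [hNdef]
              exact Finset.sum_le_sum_of_subset (Finset.filter_subset _ _)
      rw [h1]
      exact mul_le_mul_of_nonneg_left h2 (by positivity)
    have hPz := hPlb z hz
    have hMuz := hMu z hz
    simp only [hgdef]
    rw [norm_mul, norm_div, norm_mul, norm_mul, hCn, one_mul]
    rw [show ‖(1 : ℂ) - z‖ = ‖z - 1‖ from norm_sub_rev 1 z]
    have hMun : (0 : ℝ) ≤ Mu := zero_le_one.trans hMu1
    apply div_le_div₀ (mul_nonneg (mul_nonneg (mul_nonneg (norm_nonneg _)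
      (pow_nonneg (norm_nonneg _) _)) (pow_nonneg (by norm_num) _)) hMun) ?_ hp1 hPz
    calc ‖z - 1‖ * ‖Q z‖ * ‖ut z‖
        ≤ ‖z - 1‖ * (‖z - t‖ ^ (2 * ∑ j ∈ Finset.univ.filter (fun j => τ j = t), sj j)
            * 4 ^ N) * Mu := by
          apply mul_le_mul (mul_le_mul_of_nonneg_left hQb (norm_nonneg _)) hMuz
            (norm_nonneg _) (by positivity)
      _ = ‖z - 1‖ * ‖z - t‖ ^ (2 * ∑ j ∈ Finset.univ.filter (fun j => τ j = t), sj j)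
            * 4 ^ N * Mu := by ring
  -- differentiability of g on the disc
  have hutd : DifferentiableOn ℂ ut (ball (0 : ℂ) 1) := hud.congr hut_ball
  have hQd : Differentiable ℂ Q := by
    simp only [hQdef]
    exact Differentiable.fun_finsetProd fun j _ => (differentiable_id.sub_const _).fun_pow _
  have hPd : Differentiable ℂ P := by
    simp only [hPdef]
    exact Differentiable.fun_finsetProd fun j _ =>
      ((differentiable_const _).sub ((differentiable_const _).mul differentiable_id)).fun_pow _
  have hgd : DifferentiableOn ℂ g (ball (0 : ℂ) 1) := by
    simp only [hgdef]
    apply DifferentiableOn.const_mul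
    apply DifferentiableOn.div
    · exact (((differentiable_const _).sub differentiable_id).differentiableOn.mul
        hQd.differentiableOn).mul hutd
    · exact hPd.differentiableOn
    · intro z hz
      exact hPne z (ball_subset_closedBall hz)
  have hgc : ContinuousOn g (closedBall (0 : ℂ) 1) := by
    simp only [hgdef]
    apply ContinuousOn.mul continuousOn_const
    apply ContinuousOn.div
    · exact (((continuous_const.sub continuous_id).mul hQcont).continuousOn.mul hutc)
    · exact hPcont.continuousOn
    · exact hPne
  refine ⟨fun z => φ z - (ε : ℂ) * g z, ?_, ?_, ?_, ?_, ?_⟩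
  · exact hφd.sub (hgd.const_mul _)
  · exact hφc.sub (continuousOn_const.mul hgc)
  · -- strict decrease on the circle minus finitely many points
    refine ⟨insert (1 : ℂ) (Finset.image τ Finset.univ), ?_⟩
    intro z hzs hznS
    have hz1 : ‖z‖ = 1 := by simpa [mem_sphere_iff_norm] using hzs
    have hzball : z ∈ closedBall (0 : ℂ) 1 := mem_closedBall_zero_iff.2 hz1.le
    have hzne1 : z ≠ 1 := by
      intro h
      exact hznS (by rw [h]; exact Finset.mem_insert_self 1 _)
    have hzneτ : ∀ j, τ j ≠ z := by
      intro j h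
      exact hznS (Finset.mem_insert_of_mem (Finset.mem_image.2 ⟨j, Finset.mem_univ j, h⟩))
    have hRpos : 0 < Rr z := by
      simp only [hRdef]
      apply Finset.prod_pos
      intro j _
      apply pow_pos
      rw [Complex.normSq_pos]
      exact sub_ne_zero.2 fun h => hzneτ j h.symm
    have hnupos : 0 < Complex.normSq (ut z) := Complex.normSq_pos.2 (hutS z hz1)
    have hrelt : z.re < 1 := by
      have hzn := hnormSq1 z hz1
      rw [Complex.normSq_apply] at hzn
      by_contra h
      push_neg at h
      have him2 : z.im * z.im ≤ 0 := by nlinarith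
      have him : z.im = 0 := mul_self_eq_zero.1 (le_antisymm him2 (mul_self_nonneg _))
      have hre : z.re = 1 := le_antisymm (by nlinarith) h
      exact hzne1 (Complex.ext hre him)
    have h1re : (0 : ℝ) < 1 - z.re := by linarith
    have hfsq : Complex.normSq (φ z - (ε : ℂ) * g z)
        = Complex.normSq (φ z) - 2 * ε * (g z * (starRingEnd ℂ) (φ z)).re
          + ε ^ 2 * Complex.normSq (g z) := by
      rw [Complex.normSq_sub]
      have ha : Complex.normSq ((ε : ℂ) * g z) = ε ^ 2 * Complex.normSq (g z) := by
        rw [map_mul, Complex.normSq_ofReal]; ring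
      have hb : (φ z * (starRingEnd ℂ) ((ε : ℂ) * g z)).re
          = ε * (g z * (starRingEnd ℂ) (φ z)).re := by
        have hc : (starRingEnd ℂ) (g z * (starRingEnd ℂ) (φ z))
            = (starRingEnd ℂ) (g z) * φ z := by
          rw [map_mul, Complex.conj_conj]
        have hd : φ z * (starRingEnd ℂ) ((ε : ℂ) * g z)
            = (ε : ℂ) * (starRingEnd ℂ) (g z * (starRingEnd ℂ) (φ z)) := by
          rw [map_mul, Complex.conj_ofReal, hc]; ring
        rw [hd]
        simp [Complex.mul_re, Complex.conj_re, Complex.conj_im]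
      rw [ha, hb]; ring
    have hre2 : (g z * (starRingEnd ℂ) (φ z)).re
        = Rr z * Complex.normSq (ut z) * (1 - z.re) := by
      rw [hgφ z hz1]
      simp only [Complex.mul_re, Complex.ofReal_re, Complex.ofReal_im, Complex.sub_re,
        Complex.sub_im, Complex.one_re, Complex.one_im]
      ring
    have hG := hgsq z hz1
    have h1z' := h1z z hz1
    have hPz2 := hPlb2 z hzball
    have hεR := hεRr z hzball
    have hPpos : 0 < Complex.normSq (P z) := Complex.normSq_pos.2 (hPne z hzball)
    have hmain : Complex.normSq (φ z - (ε : ℂ) * g z) < Complex.normSq (φ z) := by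
      rw [hfsq, hre2, hG, h1z']
      have hT : 0 ≤ ε * (Rr z * Complex.normSq (ut z) * (1 - z.re)) := by
        apply mul_nonneg hε0.le
        apply mul_nonneg (mul_nonneg (hRnn z) hnupos.le) h1re.le
      have hkey : ε ^ 2 * (Rr z ^ 2 * Complex.normSq (ut z) * (2 * (1 - z.re))
            / Complex.normSq (P z))
          ≤ ε * (Rr z * Complex.normSq (ut z) * (1 - z.re)) := by
        rw [mul_div_assoc', div_le_iff₀ hPpos]
        have h2 : 2 * (ε * Rr z) ≤ Complex.normSq (P z) := le_trans hεR hPz2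
        calc ε ^ 2 * (Rr z ^ 2 * Complex.normSq (ut z) * (2 * (1 - z.re)))
            = (ε * (Rr z * Complex.normSq (ut z) * (1 - z.re))) * (2 * (ε * Rr z)) := by ring
          _ ≤ (ε * (Rr z * Complex.normSq (ut z) * (1 - z.re))) * Complex.normSq (P z) :=
              mul_le_mul_of_nonneg_left h2 hT
          _ = ε * (Rr z * Complex.normSq (ut z) * (1 - z.re)) * Complex.normSq (P z) := rfl
      have hTpos : 0 < ε * (Rr z * Complex.normSq (ut z) * (1 - z.re)) := by
        apply mul_pos hε0
        exact mul_pos (mul_pos hRpos hnupos) h1re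
      nlinarith [hkey, hTpos]
    have hsq : ‖φ z - (ε : ℂ) * g z‖ ^ 2 < ‖φ z‖ ^ 2 := by
      rw [Complex.sq_norm, Complex.sq_norm]
      exact hmain
    exact lt_of_pow_lt_pow_left₀ 2 (norm_nonneg _) hsq
  · -- the O(|z - τ|^(2 ν τ)) bounds
    intro t ht
    set e : ℕ := 2 * ∑ j ∈ Finset.univ.filter
      (fun j => (1 + α j) / (1 + (starRingEnd ℂ) (α j)) = t), sj j with hedef
    have h4N : (0 : ℝ) < 4 ^ N := by positivity
    have hMun : (0 : ℝ) ≤ Mu := zero_le_one.trans hMu1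
    have hXnn : (0 : ℝ) ≤ 2 * 4 ^ N * Mu := by nlinarith
    have hCb : (0 : ℝ) < ε * (2 * 4 ^ N * Mu / (1 - A) ^ N) + 1 := by
      have h := mul_nonneg hε0.le (div_nonneg hXnn hp1.le)
      linarith
    refine ⟨ε * (2 * 4 ^ N * Mu / (1 - A) ^ N) + 1, hCb, 1, one_pos, ?_⟩
    intro z hz hzt
    have hzc : z ∈ closedBall (0 : ℂ) 1 := ball_subset_closedBall hz
    have hb := hgb t z hzc
    have hee : (2 * ∑ j ∈ Finset.univ.filter (fun j => τ j = t), sj j) = e := by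
      simp only [hedef, hτdef]
    rw [hee] at hb
    have hz1' : ‖z - 1‖ ≤ 2 := by
      calc ‖z - 1‖ ≤ ‖z‖ + ‖(1 : ℂ)‖ := norm_sub_le _ _
        _ ≤ 2 := by
          rw [norm_one]
          have := mem_closedBall_zero_iff.1 hzc
          linarith
    have hX0 : (0 : ℝ) ≤ ‖z - t‖ ^ e := by positivity
    have hnorm : ‖(fun z => φ z - (ε : ℂ) * g z) z - φ z‖ = ε * ‖g z‖ := by
      simp only []
      rw [show φ z - (ε : ℂ) * g z - φ z = -((ε : ℂ) * g z) by ring, norm_neg, norm_mul]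
      rw [Complex.norm_real, Real.norm_eq_abs, abs_of_pos hε0]
    rw [hnorm]
    calc ε * ‖g z‖ ≤ ε * (‖z - 1‖ * ‖z - t‖ ^ e * 4 ^ N * Mu / (1 - A) ^ N) :=
          mul_le_mul_of_nonneg_left hb hε0.le
      _ ≤ ε * (2 * ‖z - t‖ ^ e * 4 ^ N * Mu / (1 - A) ^ N) := by
          apply mul_le_mul_of_nonneg_left ?_ hε0.le
          apply div_le_div_of_nonneg_right ?_ hp1.le
          apply mul_le_mul_of_nonneg_right ?_ hMun
          apply mul_le_mul_of_nonneg_right ?_ h4N.le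
          exact mul_le_mul_of_nonneg_right hz1' hX0
      _ = (ε * (2 * 4 ^ N * Mu / (1 - A) ^ N)) * ‖z - t‖ ^ e := by ring
      _ ≤ (ε * (2 * 4 ^ N * Mu / (1 - A) ^ N) + 1) * ‖z - t‖ ^ e := by
          apply mul_le_mul_of_nonneg_right _ hX0
          linarith
  · -- the O(|z - 1|^(2 ν 1 + 1)) bound
    set e1 : ℕ := 2 * ∑ j ∈ Finset.univ.filter
      (fun j => (1 + α j) / (1 + (starRingEnd ℂ) (α j)) = 1), sj j with he1def
    have h4N : (0 : ℝ) < 4 ^ N := by positivity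
    have hMun : (0 : ℝ) ≤ Mu := zero_le_one.trans hMu1
    have hXnn : (0 : ℝ) ≤ 4 ^ N * Mu := mul_nonneg h4N.le hMun
    have hCb : (0 : ℝ) < ε * (4 ^ N * Mu / (1 - A) ^ N) + 1 := by
      have h := mul_nonneg hε0.le (div_nonneg hXnn hp1.le)
      linarith
    refine ⟨ε * (4 ^ N * Mu / (1 - A) ^ N) + 1, hCb, 1, one_pos, ?_⟩
    intro z hz hzt
    have hzc : z ∈ closedBall (0 : ℂ) 1 := ball_subset_closedBall hz
    have hb := hgb 1 z hzc
    have hee : (2 * ∑ j ∈ Finset.univ.filter (fun j => τ j = 1), sj j) = e1 := by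
      simp only [he1def, hτdef]
    rw [hee] at hb
    have hnorm : ‖(fun z => φ z - (ε : ℂ) * g z) z - φ z‖ = ε * ‖g z‖ := by
      simp only []
      rw [show φ z - (ε : ℂ) * g z - φ z = -((ε : ℂ) * g z) by ring, norm_neg, norm_mul]
      rw [Complex.norm_real, Real.norm_eq_abs, abs_of_pos hε0]
    rw [hnorm]
    have hX0 : (0 : ℝ) ≤ ‖z - 1‖ ^ (e1 + 1) := by positivity
    calc ε * ‖g z‖ ≤ ε * (‖z - 1‖ * ‖z - 1‖ ^ e1 * 4 ^ N * Mu / (1 - A) ^ N) :=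
          mul_le_mul_of_nonneg_left hb hε0.le
      _ = (ε * (4 ^ N * Mu / (1 - A) ^ N)) * ‖z - 1‖ ^ (e1 + 1) := by
          rw [pow_succ]
          ring
      _ ≤ (ε * (4 ^ N * Mu / (1 - A) ^ N) + 1) * ‖z - 1‖ ^ (e1 + 1) := by
          apply mul_le_mul_of_nonneg_right _ hX0
          linarith
end

section
/- Let n ≥ 2, ε > 0 and, for α = (α_2,…,α_n) ∈ ℂ^{n−1}, let Z_α = {z = (z_1,…,z_n) ∈ ℂ^n : z_j = α_j (z_1 − 1) for j = 2,…,n}. If |α| > 2/ε, then Z_α ∩ B^n is contained in the ball B_ε(𝟙) of radius ε around 𝟙 = (1,0,…,0), and the boundary of Z_α ∩ B^n (the topological boundary within the affine complex line Z_α) is contained in ∂B^n ∩ B_ε(𝟙). -/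
open Metric

/-- The affine complex line `Z_α = {z ∈ ℂ^n : z_j = α_j (z_1 - 1), j = 2,…,n}`
determined by the `(n-1)`-tuple `(α j)_{j ≠ 0}`. -/
def Zslice (n : ℕ) [NeZero n] (α : Fin n → ℂ) : Set (EuclideanSpace ℂ (Fin n)) :=
  {z | ∀ j : Fin n, j ≠ 0 → z j = α j * (z 0 - 1)}

/-- `|α|² = ∑_{j ≠ 0} |α_j|²` for the `(n-1)`-tuple `(α j)_{j ≠ 0}`. -/
noncomputable def normSqTail (n : ℕ) [NeZero n] (α : Fin n → ℂ) : ℝ :=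
  ∑ j ∈ Finset.univ.erase (0 : Fin n), ‖α j‖ ^ 2

lemma norm_sq_eq' {n : ℕ} (x : EuclideanSpace ℂ (Fin n)) :
    ‖x‖ ^ 2 = ∑ j, ‖x j‖ ^ 2 := by
  rw [EuclideanSpace.norm_eq, Real.sq_sqrt (Finset.sum_nonneg fun i _ => sq_nonneg _)]

lemma key_decomp {n : ℕ} [NeZero n] (α : Fin n → ℂ) (z : EuclideanSpace ℂ (Fin n))
    (hz : z ∈ Zslice n α) :
    ‖z‖ ^ 2 = ‖z 0‖ ^ 2 + normSqTail n α * ‖z 0 - 1‖ ^ 2 ∧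
    ‖z - EuclideanSpace.single (0 : Fin n) (1 : ℂ)‖ ^ 2
      = ‖z 0 - 1‖ ^ 2 + normSqTail n α * ‖z 0 - 1‖ ^ 2 := by
  have htail : ∑ j ∈ Finset.univ.erase (0 : Fin n), ‖z j‖ ^ 2
      = normSqTail n α * ‖z 0 - 1‖ ^ 2 := by
    rw [normSqTail, Finset.sum_mul]
    refine Finset.sum_congr rfl fun j hj => ?_
    rw [hz j (Finset.mem_erase.1 hj).1, norm_mul, mul_pow]
  constructor
  · rw [norm_sq_eq', ← Finset.add_sum_erase _ _ (Finset.mem_univ (0 : Fin n)), htail]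
  · rw [norm_sq_eq', ← Finset.add_sum_erase _ _ (Finset.mem_univ (0 : Fin n))]
    have h0 : (z - EuclideanSpace.single (0 : Fin n) (1 : ℂ)) 0 = z 0 - 1 := by
      simp [EuclideanSpace.single_apply]
    have htail' : ∑ j ∈ Finset.univ.erase (0 : Fin n),
        ‖(z - EuclideanSpace.single (0 : Fin n) (1 : ℂ)) j‖ ^ 2
        = normSqTail n α * ‖z 0 - 1‖ ^ 2 := by
      rw [← htail]
      refine Finset.sum_congr rfl fun j hj => ?_
      have hj0 := (Finset.mem_erase.1 hj).1
      simp [EuclideanSpace.single_apply, hj0]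
    rw [h0, htail']

lemma key_est {n : ℕ} [NeZero n] (ε : ℝ) (hε : 0 < ε) (α : Fin n → ℂ)
    (hα : 2 / ε < Real.sqrt (normSqTail n α)) (z : EuclideanSpace ℂ (Fin n))
    (hz : z ∈ Zslice n α) (hz1 : ‖z‖ ≤ 1) :
    ‖z - EuclideanSpace.single (0 : Fin n) (1 : ℂ)‖ < ε := by
  obtain ⟨h1, h2⟩ := key_decomp α z hz
  set A := normSqTail n α with hA
  set r := ‖z 0 - 1‖ with hrdef
  set s := ‖z 0‖ with hsdef
  set t := (z 0).re with htdef
  have hApos : 4 / ε ^ 2 < A := by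
    have h4 : (0:ℝ) ≤ 2 / ε := by positivity
    have := (Real.lt_sqrt h4).1 hα
    calc 4 / ε ^ 2 = (2 / ε) ^ 2 := by ring
    _ < A := this
  have hA0 : 0 < A := lt_trans (by positivity) hApos
  have hr0 : 0 ≤ r := norm_nonneg _
  have hs0 : 0 ≤ s := norm_nonneg _
  have hsum : s ^ 2 + A * r ^ 2 ≤ 1 := by
    rw [← h1]
    calc ‖z‖ ^ 2 ≤ 1 ^ 2 := by
          exact pow_le_pow_left₀ (norm_nonneg _) hz1 2
    _ = 1 := one_pow 2
  have e : ∀ w : ℂ, ‖w‖ ^ 2 = w.re ^ 2 + w.im ^ 2 := fun w => by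
    rw [Complex.sq_norm, Complex.normSq_apply]; ring
  have hrst : r ^ 2 = s ^ 2 - 2 * t + 1 := by
    rw [hrdef, hsdef, htdef, e, e, Complex.sub_re, Complex.sub_im]
    simp; ring
  have hts : t ^ 2 ≤ s ^ 2 := by
    have : |t| ≤ ‖z 0‖ := Complex.abs_re_le_norm (z 0)
    calc t ^ 2 = |t| ^ 2 := (sq_abs t).symm
    _ ≤ s ^ 2 := pow_le_pow_left₀ (abs_nonneg _) this 2
  have hs1 : s ≤ 1 := by nlinarith
  have ht1 : t ≤ 1 := by nlinarith [abs_nonneg t, neg_abs_le t, le_abs_self t]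
  have hrt : 1 - t ≤ r := by nlinarith
  have hAr2 : A * r ^ 2 ≤ 2 * r := by nlinarith
  have hr2A : r ≤ 2 / A := by
    rcases eq_or_lt_of_le hr0 with h | h
    · rw [← h]; positivity
    · rw [le_div_iff₀ hA0]
      nlinarith
  have h2r : 2 * r ≤ 4 / A := by
    have : 2 * (2 / A) = 4 / A := by ring
    linarith
  have h4A : 4 / A < ε ^ 2 := by
    have h4 : 4 < A * ε ^ 2 := (div_lt_iff₀ (by positivity : (0:ℝ) < ε ^ 2)).1 hApos
    rw [div_lt_iff₀ hA0]; nlinarith [h4]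
  have hfinal : r ^ 2 + A * r ^ 2 < ε ^ 2 := by linarith
  rw [← h2] at hfinal
  exact lt_of_pow_lt_pow_left₀ 2 hε.le hfinal

lemma isClosed_Zslice (n : ℕ) [NeZero n] (α : Fin n → ℂ) : IsClosed (Zslice n α) := by
  have heq : Zslice n α =
      ⋂ j : Fin n, {z : EuclideanSpace ℂ (Fin n) | j ≠ 0 → z j = α j * (z 0 - 1)} := by
    ext z; simp [Zslice, Set.mem_iInter]
  rw [heq]
  refine isClosed_iInter fun j => ?_
  by_cases hj : j = 0
  · simp [hj]
  · have h2 : {z : EuclideanSpace ℂ (Fin n) | j ≠ 0 → z j = α j * (z 0 - 1)}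
        = {z | z j = α j * (z 0 - 1)} := by ext z; simp [hj]
    rw [h2]
    have hc : ∀ i : Fin n, Continuous fun z : EuclideanSpace ℂ (Fin n) => z i :=
      fun i => (EuclideanSpace.proj i).continuous
    exact isClosed_eq (hc j) (by fun_prop)

/-- **Localization of slices near `𝟙`.** For `n ≥ 2`, `ε > 0` and `|α| > 2/ε`, the
slice `Z_α ∩ B^n` is contained in the ball `B_ε(𝟙)` around `𝟙 = (1,0,…,0)`, and its
topological boundary within the affine line `Z_α` (which, `Z_α ∩ B^n` being open in the
closed set `Z_α`, equals `closure (Z_α ∩ B^n) \ (Z_α ∩ B^n)`) is contained in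
`∂B^n ∩ B_ε(𝟙)`. -/
theorem slice_localization
    (n : ℕ) (hn : 2 ≤ n) [NeZero n] (ε : ℝ) (hε : 0 < ε) (α : Fin n → ℂ)
    (hα : 2 / ε < Real.sqrt (normSqTail n α)) :
    Zslice n α ∩ ball (0 : EuclideanSpace ℂ (Fin n)) 1 ⊆
      ball (EuclideanSpace.single (0 : Fin n) (1 : ℂ)) ε ∧
    closure (Zslice n α ∩ ball (0 : EuclideanSpace ℂ (Fin n)) 1) \
        (Zslice n α ∩ ball (0 : EuclideanSpace ℂ (Fin n)) 1) ⊆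
      sphere (0 : EuclideanSpace ℂ (Fin n)) 1 ∩
        ball (EuclideanSpace.single (0 : Fin n) (1 : ℂ)) ε := by
  constructor
  · rintro z ⟨hzZ, hzB⟩
    rw [mem_ball, dist_eq_norm]
    refine key_est ε hε α hα z hzZ ?_
    rw [mem_ball, dist_zero_right] at hzB
    exact hzB.le
  · rintro z ⟨hzc, hznot⟩
    have hcl : closure (Zslice n α ∩ ball (0 : EuclideanSpace ℂ (Fin n)) 1) ⊆
        Zslice n α ∩ closedBall 0 1 := by
      calc closure (Zslice n α ∩ ball (0 : EuclideanSpace ℂ (Fin n)) 1)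
          ⊆ closure (Zslice n α) ∩ closure (ball (0 : EuclideanSpace ℂ (Fin n)) 1) :=
            closure_inter_subset_inter_closure _ _
        _ = Zslice n α ∩ closedBall 0 1 := by
            rw [(isClosed_Zslice n α).closure_eq, closure_ball _ one_ne_zero]
    obtain ⟨hzZ, hzcb⟩ := hcl hzc
    rw [mem_closedBall, dist_zero_right] at hzcb
    have hball : z ∈ ball (EuclideanSpace.single (0 : Fin n) (1 : ℂ)) ε := by
      rw [mem_ball, dist_eq_norm]
      exact key_est ε hε α hα z hzZ hzcb
    refine ⟨?_, hball⟩
    have hge : 1 ≤ ‖z‖ := by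
      by_contra h
      push_neg at h
      exact hznot ⟨hzZ, by rw [mem_ball, dist_zero_right]; exact h⟩
    rw [mem_sphere, dist_zero_right]
    exact le_antisymm hzcb hge
end

section
/- Let n ≥ 2, R > 0 and, for α = (α_2,…,α_n) ∈ ℂ^{n−1}, let Z_α = {z = (z_1,…,z_n) ∈ ℂ^n : z_j = α_j (z_1 − 1) for j = 2,…,n}. Then ⋃_{|α| > R} (Z_α ∩ B^n) = ((⋃_{|α| > R} Z_α) \ {𝟙}) ∩ B^n, and this set contains a nonempty open subset of B^n. Consequently, any two holomorphic functions on B^n that agree on ⋃_{|α| > R} (Z_α ∩ B^n) agree on all of B^n. -/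
open Metric

/-- **The slices fill an open set.** For `n ≥ 2` and `R > 0`, one has
`⋃_{|α| > R} (Z_α ∩ B^n) = ((⋃_{|α| > R} Z_α) \ {𝟙}) ∩ B^n`; this set contains a
nonempty open subset of `B^n`, and consequently two holomorphic functions on `B^n`
agreeing on it agree on all of `B^n`. -/
theorem slices_fill_open_set
    (n : ℕ) (hn : 2 ≤ n) [NeZero n] (R : ℝ) (hR : 0 < R) :
    (⋃ (α : Fin n → ℂ) (_ : R < Real.sqrt (normSqTail n α)),
        (Zslice n α ∩ ball (0 : EuclideanSpace ℂ (Fin n)) 1)) =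
      ((⋃ (α : Fin n → ℂ) (_ : R < Real.sqrt (normSqTail n α)), Zslice n α) \
          {EuclideanSpace.single (0 : Fin n) (1 : ℂ)}) ∩
        ball (0 : EuclideanSpace ℂ (Fin n)) 1 ∧
    (∃ U : Set (EuclideanSpace ℂ (Fin n)), IsOpen U ∧ U.Nonempty ∧
      U ⊆ ball (0 : EuclideanSpace ℂ (Fin n)) 1 ∧
      U ⊆ ⋃ (α : Fin n → ℂ) (_ : R < Real.sqrt (normSqTail n α)),
        (Zslice n α ∩ ball (0 : EuclideanSpace ℂ (Fin n)) 1)) ∧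
    (∀ f g : EuclideanSpace ℂ (Fin n) → ℂ,
      DifferentiableOn ℂ f (ball (0 : EuclideanSpace ℂ (Fin n)) 1) →
      DifferentiableOn ℂ g (ball (0 : EuclideanSpace ℂ (Fin n)) 1) →
      (∀ z ∈ ⋃ (α : Fin n → ℂ) (_ : R < Real.sqrt (normSqTail n α)),
        (Zslice n α ∩ ball (0 : EuclideanSpace ℂ (Fin n)) 1), f z = g z) →
      Set.EqOn f g (ball (0 : EuclideanSpace ℂ (Fin n)) 1)) := by
  classical
  have h10 : (1 : Fin n) ≠ 0 := by
    simp [Fin.ext_iff, Fin.val_one', Nat.mod_eq_of_lt (by omega : 1 < n)]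
  have coord : ∀ (z : EuclideanSpace ℂ (Fin n)) (j : Fin n), ‖z j‖ ≤ ‖z‖ := by
    intro z j
    rw [EuclideanSpace.norm_eq,
      show ‖z j‖ = Real.sqrt (‖z j‖ ^ 2) by rw [Real.sqrt_sq (norm_nonneg _)]]
    exact Real.sqrt_le_sqrt
      (Finset.single_le_sum (fun i _ => sq_nonneg ‖z i‖) (Finset.mem_univ j))
  set U : Set (EuclideanSpace ℂ (Fin n)) :=
    {z | ‖z‖ < 1 ∧ R ^ 2 * ‖z 0 - 1‖ ^ 2 < ∑ j ∈ Finset.univ.erase (0 : Fin n), ‖z j‖ ^ 2}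
    with hUdef
  have hUopen : IsOpen U := by
    have c1 : Continuous fun z : EuclideanSpace ℂ (Fin n) => R ^ 2 * ‖z 0 - 1‖ ^ 2 :=
      continuous_const.mul (((EuclideanSpace.proj (0 : Fin n)).continuous.sub
        continuous_const).norm.pow 2)
    have c2 : Continuous fun z : EuclideanSpace ℂ (Fin n) =>
        ∑ j ∈ Finset.univ.erase (0 : Fin n), ‖z j‖ ^ 2 :=
      continuous_finset_sum _ fun j _ => (EuclideanSpace.proj j).continuous.norm.pow 2
    exact IsOpen.inter (isOpen_lt continuous_norm continuous_const) (isOpen_lt c1 c2)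
  have hUball : U ⊆ ball (0 : EuclideanSpace ℂ (Fin n)) 1 := fun z hz =>
    mem_ball_zero_iff.2 hz.1
  have hUsub : U ⊆ ⋃ (α : Fin n → ℂ) (_ : R < Real.sqrt (normSqTail n α)),
      (Zslice n α ∩ ball (0 : EuclideanSpace ℂ (Fin n)) 1) := by
    intro z hz
    obtain ⟨hz1, hz2⟩ := hz
    have hz0 : z 0 ≠ 1 := by
      intro h
      have := coord z 0
      rw [h, norm_one] at this
      linarith
    have hsub : z 0 - 1 ≠ 0 := sub_ne_zero.2 hz0
    have hpos : 0 < ‖z 0 - 1‖ := norm_pos_iff.2 hsub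
    refine Set.mem_iUnion.2 ⟨fun j => if j = 0 then 0 else z j / (z 0 - 1),
      Set.mem_iUnion.2 ⟨?_, ?_, mem_ball_zero_iff.2 hz1⟩⟩
    · have hαval : normSqTail n (fun j => if j = 0 then 0 else z j / (z 0 - 1))
          = (∑ j ∈ Finset.univ.erase (0 : Fin n), ‖z j‖ ^ 2) / ‖z 0 - 1‖ ^ 2 := by
        unfold normSqTail
        rw [Finset.sum_div]
        refine Finset.sum_congr rfl fun j hj => ?_
        simp only [if_neg (Finset.ne_of_mem_erase hj)]
        rw [norm_div, div_pow]
      rw [hαval, Real.lt_sqrt hR.le, lt_div_iff₀ (by positivity)]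
      exact hz2
    · intro j hj
      simp only [if_neg hj]
      exact (div_mul_cancel₀ _ hsub).symm
  have hUne : U.Nonempty := by
    set ε : ℝ := 1 / (1 + 2 * R ^ 2) with hεdef
    have hε0 : 0 < ε := by positivity
    have hε1 : ε < 1 := by
      rw [hεdef, div_lt_one (by positivity)]
      nlinarith
    have hεR : R ^ 2 * ε < 1 := by
      rw [hεdef, mul_one_div, div_lt_one (by positivity)]
      nlinarith
    refine ⟨(WithLp.toLp 2 (fun j => if j = 0 then ((1 - ε : ℝ) : ℂ)
      else if j = (1 : Fin n) then ((Real.sqrt ε : ℝ) : ℂ) else 0) :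
      EuclideanSpace ℂ (Fin n)), ?_, ?_⟩
    · set z : EuclideanSpace ℂ (Fin n) := WithLp.toLp 2 (fun j => if j = 0 then ((1 - ε : ℝ) : ℂ)
        else if j = (1 : Fin n) then ((Real.sqrt ε : ℝ) : ℂ) else 0) with hzdef
      have htail : ∑ j ∈ Finset.univ.erase (0 : Fin n), ‖z j‖ ^ 2 = ε := by
        rw [Finset.sum_eq_single_of_mem (1 : Fin n)
          (Finset.mem_erase.2 ⟨h10, Finset.mem_univ _⟩)]
        · simp [hzdef, PiLp.toLp_apply, h10, Complex.norm_real, Real.norm_eq_abs,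
            abs_of_nonneg (Real.sqrt_nonneg ε), Real.sq_sqrt hε0.le]
        · intro b hb hb1
          simp [hzdef, PiLp.toLp_apply, Finset.ne_of_mem_erase hb, hb1]
      show ‖z‖ < 1
      rw [EuclideanSpace.norm_eq, ← Finset.add_sum_erase _ _ (Finset.mem_univ (0 : Fin n)),
        htail]
      have hz0 : ‖z 0‖ = 1 - ε := by
        simp only [hzdef, PiLp.toLp_apply, if_pos rfl, if_true, Complex.norm_real, Real.norm_eq_abs]
        exact abs_of_nonneg (by linarith)
      rw [hz0, Real.sqrt_lt' one_pos]
      nlinarith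
    · set z : EuclideanSpace ℂ (Fin n) := WithLp.toLp 2 (fun j => if j = 0 then ((1 - ε : ℝ) : ℂ)
        else if j = (1 : Fin n) then ((Real.sqrt ε : ℝ) : ℂ) else 0) with hzdef
      have htail : ∑ j ∈ Finset.univ.erase (0 : Fin n), ‖z j‖ ^ 2 = ε := by
        rw [Finset.sum_eq_single_of_mem (1 : Fin n)
          (Finset.mem_erase.2 ⟨h10, Finset.mem_univ _⟩)]
        · simp [hzdef, PiLp.toLp_apply, h10, Complex.norm_real, Real.norm_eq_abs,
            abs_of_nonneg (Real.sqrt_nonneg ε), Real.sq_sqrt hε0.le]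
        · intro b hb hb1
          simp [hzdef, PiLp.toLp_apply, Finset.ne_of_mem_erase hb, hb1]
      show R ^ 2 * ‖z 0 - 1‖ ^ 2 < _
      rw [htail]
      have : z 0 - 1 = ((-ε : ℝ) : ℂ) := by
        simp only [hzdef, PiLp.toLp_apply, if_pos rfl]
        push_cast
        ring
      rw [this, Complex.norm_real, Real.norm_eq_abs, abs_neg, abs_of_nonneg hε0.le]
      nlinarith
  refine ⟨?_, ⟨U, hUopen, hUne, hUball, hUsub⟩, ?_⟩
  · have hone : EuclideanSpace.single (0 : Fin n) (1 : ℂ) ∉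
        ball (0 : EuclideanSpace ℂ (Fin n)) 1 := by
      simp [mem_ball_zero_iff, EuclideanSpace.norm_single]
    ext z
    simp only [Set.mem_iUnion, Set.mem_inter_iff, Set.mem_diff, Set.mem_singleton_iff]
    constructor
    · rintro ⟨α, hα, hzα, hzb⟩
      exact ⟨⟨⟨α, hα, hzα⟩, fun h => hone (h ▸ hzb)⟩, hzb⟩
    · rintro ⟨⟨⟨α, hα, hzα⟩, -⟩, hzb⟩
      exact ⟨α, hα, hzα, hzb⟩
  · intro f g hf hg hfg w hw
    obtain ⟨p, hp⟩ := hUne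
    obtain ⟨δ, hδ0, hδ⟩ := Metric.isOpen_iff.1 hUopen p hp
    have hfgU : ∀ z ∈ U, f z = g z := fun z hz => hfg z (hUsub hz)
    by_cases hwp : w = p
    · rw [hwp]; exact hfgU p hp
    · have hnv : 0 < ‖w - p‖ := norm_pos_iff.2 (sub_ne_zero.2 hwp)
      set L : ℂ → EuclideanSpace ℂ (Fin n) := fun ζ => ζ • (w - p) + p with hLdef
      have hLcont : Continuous L := (continuous_id.smul continuous_const).add continuous_const
      have hLdiff : Differentiable ℂ L := (differentiable_id.smul_const (w - p)).add_const p
      set D : Set ℂ := L ⁻¹' ball (0 : EuclideanSpace ℂ (Fin n)) 1 with hDdef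
      have hDopen : IsOpen D := isOpen_ball.preimage hLcont
      have hDconv : Convex ℝ D := by
        intro ζ₁ h₁ ζ₂ h₂ a b ha hb hab
        have key : L (a • ζ₁ + b • ζ₂) = a • L ζ₁ + b • L ζ₂ := by
          simp only [hLdef]
          rw [add_smul, smul_assoc, smul_assoc, smul_add, smul_add]
          have hcombo : a • p + b • p = p := Convex.combo_self hab p
          rw [show a • (ζ₁ • (w - p)) + a • p + (b • (ζ₂ • (w - p)) + b • p)
              = a • (ζ₁ • (w - p)) + b • (ζ₂ • (w - p)) + (a • p + b • p) by abel, hcombo]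
        show L (a • ζ₁ + b • ζ₂) ∈ ball (0 : EuclideanSpace ℂ (Fin n)) 1
        rw [key]
        exact convex_ball (0 : EuclideanSpace ℂ (Fin n)) 1 h₁ h₂ ha hb hab
      have hmaps : Set.MapsTo L D (ball (0 : EuclideanSpace ℂ (Fin n)) 1) := fun ζ hζ => hζ
      have hφdiff : DifferentiableOn ℂ (fun ζ => f (L ζ) - g (L ζ)) D :=
        ((hf.comp hLdiff.differentiableOn hmaps).sub (hg.comp hLdiff.differentiableOn hmaps))
      have hφan : AnalyticOnNhd ℂ (fun ζ => f (L ζ) - g (L ζ)) D :=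
        hφdiff.analyticOnNhd hDopen
      have h0D : (0 : ℂ) ∈ D := by
        show L 0 ∈ ball (0 : EuclideanSpace ℂ (Fin n)) 1
        simp only [hLdef, zero_smul, zero_add]
        exact hUball hp
      have h1D : (1 : ℂ) ∈ D := by
        show L 1 ∈ ball (0 : EuclideanSpace ℂ (Fin n)) 1
        simp only [hLdef, one_smul, sub_add_cancel]
        exact hw
      have hev : (fun ζ => f (L ζ) - g (L ζ)) =ᶠ[nhds (0 : ℂ)] (fun _ => 0) := by
        have hmem : Metric.ball (0 : ℂ) (δ / ‖w - p‖) ∈ nhds (0 : ℂ) :=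
          ball_mem_nhds _ (by positivity)
        filter_upwards [hmem] with ζ hζ
        have hLζ : L ζ ∈ ball p δ := by
          rw [mem_ball, dist_eq_norm]
          simp only [hLdef, add_sub_cancel_right]
          rw [norm_smul]
          calc ‖ζ‖ * ‖w - p‖ < (δ / ‖w - p‖) * ‖w - p‖ :=
                mul_lt_mul_of_pos_right (mem_ball_zero_iff.1 hζ) hnv
            _ = δ := div_mul_cancel₀ _ hnv.ne'
        rw [hfgU _ (hδ hLζ), sub_self]
      have := hφan.eqOn_of_preconnected_of_eventuallyEq analyticOnNhd_const
        hDconv.isPreconnected h0D hev h1D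
      have hL1 : L 1 = w := by simp [hLdef]
      simp only [hL1] at this
      exact sub_eq_zero.1 this
end
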